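/- arXiv:1412.1230 — 5 statements merged into one kernel-verified Lean document; each statement's English description precedes it below -/
import Mathlib

section
/- Let 0 < M ≤ Id be a real symmetric 3×3 matrix with at least two eigenvalues strictly less than 1, and let V(x) = 1/|x| − 1/(√(det(M^{-1}))·|M^{1/2}x|) for x ≠ 0. Then there exist constants a, b with 0 ≤ b < a ≤ 1 such that b/|x| ≤ V(x) ≤ a/|x| for all x ≠ 0. If moreover M < Id (all eigenvalues strictly less than 1), one may take b > 0. -/
open Matrix

section

open scoped ComplexOrder

/-- The square root of a positive semidefinite matrix, as `Matrix.PosSemidef.sqrt` was defined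
in Mathlib of December 2024 (since removed in favour of `CFC.sqrt`). -/
noncomputable def Matrix.PosSemidef.sqrtOld {n 𝕜 : Type*} [Fintype n] [DecidableEq n] [RCLike 𝕜]
    {A : Matrix n n 𝕜} (hA : A.PosSemidef) : Matrix n n 𝕜 :=
  (hA.1.eigenvectorUnitary : Matrix n n 𝕜) * diagonal (((↑) : ℝ → 𝕜) ∘ (√·) ∘ hA.1.eigenvalues) *
    (star hA.1.eigenvectorUnitary : Matrix n n 𝕜)

end

private lemma aniso_sqrtOld_mul_self (M : Matrix (Fin 3) (Fin 3) ℝ) (hM : M.PosDef) :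
    hM.posSemidef.sqrtOld * hM.posSemidef.sqrtOld = M := by
  set U : Matrix (Fin 3) (Fin 3) ℝ := ↑(hM.1.eigenvectorUnitary) with hU
  have hUU : star U * U = 1 := (Matrix.mem_unitaryGroup_iff').mp hM.1.eigenvectorUnitary.2
  have hspec : M = U * diagonal ((RCLike.ofReal ∘ hM.1.eigenvalues) : Fin 3 → ℝ) * star U :=
    hM.1.spectral_theorem
  change U * diagonal (((↑) : ℝ → ℝ) ∘ (√·) ∘ hM.1.eigenvalues) * star U *
    (U * diagonal (((↑) : ℝ → ℝ) ∘ (√·) ∘ hM.1.eigenvalues) * star U) = M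
  conv_rhs => rw [hspec]
  simp only [Matrix.mul_assoc]
  rw [← Matrix.mul_assoc (star U) U, hUU, Matrix.one_mul, ← Matrix.mul_assoc (diagonal _),
    diagonal_mul_diagonal]
  congr 3
  funext i
  simp [Real.mul_self_sqrt (hM.eigenvalues_pos i).le]

private lemma aniso_sqrtOld_herm (M : Matrix (Fin 3) (Fin 3) ℝ) (hM : M.PosDef) :
    (hM.posSemidef.sqrtOld)ᴴ = hM.posSemidef.sqrtOld := by
  unfold Matrix.PosSemidef.sqrtOld
  simp only [conjTranspose_mul, diagonal_conjTranspose, star_trivial, star_eq_conjTranspose,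
    conjTranspose_conjTranspose, Matrix.mul_assoc]

private lemma aniso_eig_le_one (M : Matrix (Fin 3) (Fin 3) ℝ) (hM : M.PosDef)
    (hM1 : ((1 : Matrix (Fin 3) (Fin 3) ℝ) - M).PosSemidef) (i : Fin 3) :
    hM.1.eigenvalues i ≤ 1 := by
  have heig := hM.1.eigenvalues_eq i
  have hb : ‖hM.1.eigenvectorBasis i‖ = 1 := hM.1.eigenvectorBasis.orthonormal.1 i
  set v : Fin 3 → ℝ := ⇑(hM.1.eigenvectorBasis i) with hv
  have h2 := hM1.dotProduct_mulVec_nonneg v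
  have hvv : v ⬝ᵥ v = 1 := by
    have h3 : (inner (𝕜 := ℝ) (hM.1.eigenvectorBasis i) (hM.1.eigenvectorBasis i)) = 1 := by
      rw [real_inner_self_eq_norm_sq, hb]; norm_num
    rw [PiLp.inner_apply] at h3
    simpa [dotProduct, RCLike.inner_apply, sq, hv] using h3
  simp only [star_trivial, sub_mulVec, one_mulVec, dotProduct_sub, hvv,
    RCLike.re_to_real] at h2 heig
  linarith

private lemma aniso_quad_lower (M : Matrix (Fin 3) (Fin 3) ℝ) (hM : M.PosDef) (μ : ℝ)
    (hμ : ∀ i, μ ≤ hM.1.eigenvalues i) (x : Fin 3 → ℝ) :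
    μ * (x ⬝ᵥ x) ≤ x ⬝ᵥ (M *ᵥ x) := by
  set U : Matrix (Fin 3) (Fin 3) ℝ := ↑(hM.1.eigenvectorUnitary) with hU
  have hUU : U * star U = 1 := (Matrix.mem_unitaryGroup_iff).mp hM.1.eigenvectorUnitary.2
  have hdiag : M - μ • 1 = U * diagonal (fun i => hM.1.eigenvalues i - μ) * star U := by
    have hspec : M = U * diagonal ((RCLike.ofReal ∘ hM.1.eigenvalues) : Fin 3 → ℝ) * star U :=
      hM.1.spectral_theorem
    have h1 : diagonal ((RCLike.ofReal ∘ hM.1.eigenvalues) : Fin 3 → ℝ) - μ • 1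
        = diagonal (fun i => hM.1.eigenvalues i - μ) := by
      rw [← diagonal_one, ← diagonal_smul, diagonal_sub]
      funext i
      simp
    calc M - μ • 1 = U * diagonal ((RCLike.ofReal ∘ hM.1.eigenvalues) : Fin 3 → ℝ) * star U
          - μ • (U * star U) := by rw [← hspec, hUU]
      _ = U * (diagonal ((RCLike.ofReal ∘ hM.1.eigenvalues) : Fin 3 → ℝ) - μ • 1) * star U := by
          simp [Matrix.mul_sub, Matrix.sub_mul, mul_smul_comm, smul_mul_assoc]
      _ = _ := by rw [h1]
  have hpsd : (M - μ • 1).PosSemidef := by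
    rw [hdiag, star_eq_conjTranspose]
    exact Matrix.PosSemidef.mul_mul_conjTranspose_same
      (posSemidef_diagonal_iff.mpr fun i => sub_nonneg.mpr (hμ i)) U
  have h2 := hpsd.dotProduct_mulVec_nonneg x
  simp only [star_trivial, sub_mulVec, dotProduct_sub, smul_mulVec, one_mulVec,
    dotProduct_smul, smul_eq_mul] at h2
  linarith

private lemma aniso_norm_sq (M : Matrix (Fin 3) (Fin 3) ℝ) (hM : M.PosDef)
    (x : EuclideanSpace ℝ (Fin 3)) :
    ‖(Matrix.toEuclideanCLM (𝕜 := ℝ) hM.posSemidef.sqrtOld) x‖ ^ 2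
      = (WithLp.equiv 2 _ x) ⬝ᵥ (M *ᵥ (WithLp.equiv 2 _ x)) := by
  set A := hM.posSemidef.sqrtOld with hA
  set y := (Matrix.toEuclideanCLM (𝕜 := ℝ) A) x with hy
  set v : Fin 3 → ℝ := WithLp.equiv 2 _ x with hv
  have hyv : (WithLp.equiv 2 _ y) = A *ᵥ v := by
    rw [hy]; rfl
  have h1 : ‖y‖ ^ 2 = (A *ᵥ v) ⬝ᵥ (A *ᵥ v) := by
    rw [← real_inner_self_eq_norm_sq]
    rw [← hyv]
    simp [PiLp.inner_apply, dotProduct, RCLike.inner_apply]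
    rw [EuclideanSpace.norm_eq, Real.sq_sqrt (by positivity)]
    simp [sq]
  rw [h1]
  have hT : Aᵀ = A := by
    rw [← Matrix.conjTranspose_eq_transpose_of_trivial, aniso_sqrtOld_herm M hM]
  calc (A *ᵥ v) ⬝ᵥ (A *ᵥ v) = v ᵥ* A ⬝ᵥ (A *ᵥ v) := by rw [← vecMul_transpose, hT]
    _ = v ⬝ᵥ (A *ᵥ (A *ᵥ v)) := (dotProduct_mulVec v A (A *ᵥ v)).symm
    _ = v ⬝ᵥ (M *ᵥ v) := by rw [mulVec_mulVec, aniso_sqrtOld_mul_self M hM]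

private lemma aniso_norm_sq_self (x : EuclideanSpace ℝ (Fin 3)) :
    ‖x‖ ^ 2 = (WithLp.equiv 2 _ x) ⬝ᵥ (WithLp.equiv 2 _ x) := by
  rw [EuclideanSpace.norm_eq, Real.sq_sqrt (by positivity)]
  simp [dotProduct, sq]

private lemma aniso_det_lt_min (lam : Fin 3 → ℝ) (hpos : ∀ i, 0 < lam i)
    (hle1 : ∀ i, lam i ≤ 1) (htwo : ∃ i j : Fin 3, i ≠ j ∧ lam i < 1 ∧ lam j < 1) :
    lam 0 * lam 1 * lam 2 < min (min (lam 0) (lam 1)) (lam 2) := by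
  obtain ⟨i, j, hij, hi, hj⟩ := htwo
  have e0 : lam ⟨0, by omega⟩ = lam 0 := rfl
  have e1 : lam ⟨1, by omega⟩ = lam 1 := rfl
  have e2 : lam ⟨2, by omega⟩ = lam 2 := rfl
  refine lt_min (lt_min ?_ ?_) ?_ <;>
  · fin_cases i <;> fin_cases j <;> norm_num at hi hj hij <;>
      nlinarith [e0, e1, e2, hpos 0, hpos 1, hpos 2, hle1 0, hle1 1, hle1 2,
        mul_pos (hpos 0) (hpos 1), mul_pos (hpos 1) (hpos 2), mul_pos (hpos 0) (hpos 2)]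

theorem anisotropic_potential_coulomb_bounds (M : Matrix (Fin 3) (Fin 3) ℝ)
    (hM : M.PosDef)
    (hM1 : ((1 : Matrix (Fin 3) (Fin 3) ℝ) - M).PosSemidef)
    (htwo : ∃ i j : Fin 3, i ≠ j ∧ hM.1.eigenvalues i < 1 ∧ hM.1.eigenvalues j < 1)
    (V : EuclideanSpace ℝ (Fin 3) → ℝ)
    (hV : ∀ x, x ≠ 0 → V x = 1 / ‖x‖ -
      1 / (Real.sqrt (M⁻¹).det * ‖(Matrix.toEuclideanCLM (𝕜 := ℝ) hM.posSemidef.sqrtOld) x‖)) :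
    (∃ a b : ℝ, 0 ≤ b ∧ b < a ∧ a ≤ 1 ∧
      ∀ x, x ≠ 0 → b / ‖x‖ ≤ V x ∧ V x ≤ a / ‖x‖) ∧
    (((1 : Matrix (Fin 3) (Fin 3) ℝ) - M).PosDef →
      ∃ a b : ℝ, 0 < b ∧ b < a ∧ a ≤ 1 ∧
        ∀ x, x ≠ 0 → b / ‖x‖ ≤ V x ∧ V x ≤ a / ‖x‖) := by
  set lam := hM.1.eigenvalues with hlam
  set μ : ℝ := min (min (lam 0) (lam 1)) (lam 2) with hμdef
  have hpos : ∀ i, 0 < lam i := fun i => hM.eigenvalues_pos i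
  have hle1 : ∀ i, lam i ≤ 1 := aniso_eig_le_one M hM hM1
  have hμle : ∀ i, μ ≤ lam i := by
    intro i
    fin_cases i
    · exact le_trans (min_le_left _ _) (min_le_left _ _)
    · exact le_trans (min_le_left _ _) (min_le_right _ _)
    · exact min_le_right _ _
  have hμpos : 0 < μ := lt_min (lt_min (hpos 0) (hpos 1)) (hpos 2)
  have hdet : M.det = lam 0 * lam 1 * lam 2 := by
    have h := hM.1.det_eq_prod_eigenvalues
    rw [Fin.prod_univ_three] at h
    simpa using h
  have hdetpos : 0 < M.det := hM.det_pos
  have hdetlt : M.det < μ := by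
    rw [hdet, hμdef]
    exact aniso_det_lt_min lam hpos hle1 htwo
  set D := M.det with hD
  set c : ℝ := Real.sqrt (D / μ) with hc
  have hcpos : 0 < c := Real.sqrt_pos.mpr (div_pos hdetpos hμpos)
  have hclt1 : c < 1 := by
    have h1 : D / μ < 1 := (div_lt_one hμpos).mpr hdetlt
    calc c < Real.sqrt 1 := Real.sqrt_lt_sqrt (le_of_lt (div_pos hdetpos hμpos)) h1
      _ = 1 := Real.sqrt_one
  have key : ∀ x : EuclideanSpace ℝ (Fin 3), x ≠ 0 →
      (1 - c) / ‖x‖ ≤ V x ∧ V x ≤ 1 / ‖x‖ := by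
    intro x hx
    have hr : 0 < ‖x‖ := norm_pos_iff.mpr hx
    set N := ‖(Matrix.toEuclideanCLM (𝕜 := ℝ) hM.posSemidef.sqrtOld) x‖ with hN
    have hlow : μ * ‖x‖ ^ 2 ≤ N ^ 2 := by
      rw [aniso_norm_sq M hM x, aniso_norm_sq_self x]
      exact aniso_quad_lower M hM μ hμle _
    have hNpos : 0 < N := by
      have h0 : 0 < N ^ 2 := lt_of_lt_of_le (by positivity) hlow
      have hNn : 0 ≤ N := hN ▸ norm_nonneg _
      nlinarith
    have hNge : Real.sqrt μ * ‖x‖ ≤ N := by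
      have h1 : Real.sqrt (μ * ‖x‖ ^ 2) ≤ Real.sqrt (N ^ 2) := Real.sqrt_le_sqrt hlow
      rwa [Real.sqrt_mul hμpos.le, Real.sqrt_sq (norm_nonneg x), Real.sqrt_sq hNpos.le] at h1
    -- the subtracted term
    have hdinv : (M⁻¹).det = D⁻¹ := by rw [det_nonsing_inv, Ring.inverse_eq_inv]
    have hterm : 1 / (Real.sqrt (M⁻¹).det * N) = Real.sqrt D / N := by
      rw [hdinv, Real.sqrt_inv]
      rw [one_div, mul_inv, inv_inv, div_eq_mul_inv]
    have hTpos : 0 < Real.sqrt D / N := by positivity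
    have hTle : Real.sqrt D / N ≤ c / ‖x‖ := by
      have h2 : Real.sqrt D / N ≤ Real.sqrt D / (Real.sqrt μ * ‖x‖) :=
        div_le_div_of_nonneg_left (Real.sqrt_nonneg D) (by positivity) hNge
      have h3 : Real.sqrt D / (Real.sqrt μ * ‖x‖) = c / ‖x‖ := by
        rw [hc, Real.sqrt_div hdetpos.le, div_div]
      linarith
    have hVx := hV x hx
    rw [← hN] at hVx
    constructor
    · rw [hVx, sub_div]
      have := hterm ▸ hTle
      linarith
    · rw [hVx]
      have := hterm ▸ hTpos
      linarith
  have hb0 : 0 < 1 - c := by linarith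
  refine ⟨⟨1, 1 - c, hb0.le, by linarith, le_refl 1, key⟩,
    fun _ => ⟨1, 1 - c, hb0, by linarith, le_refl 1, key⟩⟩
end

section
/- Let M = diag(m₁, m₂, m₃) with 0 < m₃ ≤ m₂ ≤ m₁ < 1 and V(x) = 1/|x| − 1/|M^{-1}x|. For k ∈ {1,2,3} and x with x_k ≠ 0, the partial derivative of V with respect to |x_k| is ∂_{|x_k|}V(x) = m_k^{-2}|x_k|/(m₁^{-2}x₁² + m₂^{-2}x₂² + m₃^{-2}x₃²)^{3/2} − |x_k|/|x|³, and this is ≤ 0 for almost every x ∈ ℝ³ if and only if m₁³ ≤ m_k². -/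
open MeasureTheory

lemma sum_update_div_sq (x w : Fin 3 → ℝ) (k : Fin 3) (s : ℝ) :
    ∑ i, (Function.update x k s i / w i) ^ 2
      = (s / w k) ^ 2 + ∑ i ∈ Finset.univ \ {k}, (x i / w i) ^ 2 := by
  have h : ∀ i ∈ Finset.univ, (Function.update x k s i / w i) ^ 2
      = Function.update (fun i => (x i / w i) ^ 2) k ((s / w k) ^ 2) i := by
    intro i _
    rcases eq_or_ne i k with h | h
    · subst h; simp
    · simp [Function.update_of_ne h]
  rw [Finset.sum_congr rfl h]
  exact Finset.sum_update_of_mem (Finset.mem_univ k) _ _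

lemma key_deriv (c : ℝ) (hc : 0 ≤ c) (w : ℝ) (hw : 0 < w) (a : ℝ) (ha : 0 < a) :
    HasDerivAt (fun s : ℝ => 1 / Real.sqrt ((s / w) ^ 2 + c))
      (-(w⁻¹ ^ 2 * a / Real.sqrt ((a / w) ^ 2 + c) ^ 3)) a := by
  have hpos : 0 < (a / w) ^ 2 + c := by positivity
  have h1 : HasDerivAt (fun s : ℝ => (s / w) ^ 2 + c) (2 * (a / w) ^ 1 * (1 / w)) a :=
    (((hasDerivAt_id a).div_const w).pow 2).add_const c
  have hs : Real.sqrt ((a / w) ^ 2 + c) ≠ 0 := by positivity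
  have h2 := (h1.sqrt (ne_of_gt hpos)).inv hs
  have h3 : (fun s : ℝ => 1 / Real.sqrt ((s / w) ^ 2 + c))
      = fun s : ℝ => (Real.sqrt ((s / w) ^ 2 + c))⁻¹ := by
    funext s; rw [one_div]
  rw [h3]
  refine h2.congr_deriv ?_
  have hsq : Real.sqrt ((a / w) ^ 2 + c) ^ 3
      = ((a / w) ^ 2 + c) * Real.sqrt ((a / w) ^ 2 + c) := by
    rw [pow_succ, Real.sq_sqrt hpos.le]
  rw [pow_one, hsq]
  rw [Real.sq_sqrt hpos.le]
  field_simp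

lemma key_deriv1 (c : ℝ) (hc : 0 ≤ c) (a : ℝ) (ha : 0 < a) :
    HasDerivAt (fun s : ℝ => 1 / Real.sqrt (s ^ 2 + c))
      (-(a / Real.sqrt (a ^ 2 + c) ^ 3)) a := by
  simpa using key_deriv c hc 1 one_pos a ha

theorem anisotropic_potential_deriv_sign (m : Fin 3 → ℝ)
    (h3 : 0 < m 2) (h32 : m 2 ≤ m 1) (h21 : m 1 ≤ m 0) (h1 : m 0 < 1)
    (V : (Fin 3 → ℝ) → ℝ)
    (hV : ∀ x, V x = 1 / Real.sqrt (∑ i, (x i) ^ 2)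
        - 1 / Real.sqrt (∑ i, (x i / m i) ^ 2))
    (D : Fin 3 → (Fin 3 → ℝ) → ℝ)
    (hD : ∀ k x, D k x =
        ((m k)⁻¹) ^ 2 * |x k| / Real.sqrt (∑ i, (x i / m i) ^ 2) ^ 3
        - |x k| / Real.sqrt (∑ i, (x i) ^ 2) ^ 3) :
    ∀ k : Fin 3,
      (∀ x : Fin 3 → ℝ, 0 < x k →
        HasDerivAt (fun s => V (Function.update x k s)) (D k x) (x k)) ∧
      ((∀ᵐ x ∂(volume : Measure (Fin 3 → ℝ)), D k x ≤ 0) ↔ (m 0) ^ 3 ≤ (m k) ^ 2) := by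
  have hm : ∀ i : Fin 3, 0 < m i := by
    intro i; fin_cases i <;> simp <;> linarith
  have hmle : ∀ i : Fin 3, m i ≤ m 0 := by
    intro i; fin_cases i <;> simp <;> linarith
  intro k
  constructor
  · -- derivative
    intro x hx
    set C1 : ℝ := ∑ i ∈ Finset.univ \ {k}, (x i) ^ 2 with hC1def
    set C2 : ℝ := ∑ i ∈ Finset.univ \ {k}, (x i / m i) ^ 2 with hC2def
    have hC1 : 0 ≤ C1 := Finset.sum_nonneg fun i _ => sq_nonneg _
    have hC2 : 0 ≤ C2 := Finset.sum_nonneg fun i _ => sq_nonneg _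
    have e1 : ∀ s : ℝ, ∑ i, (Function.update x k s i) ^ 2 = s ^ 2 + C1 := by
      intro s
      have h := sum_update_div_sq x (fun _ => 1) k s
      simp only [div_one] at h
      rw [hC1def]
      exact h
    have e2 : ∀ s : ℝ, ∑ i, (Function.update x k s i / m i) ^ 2 = (s / m k) ^ 2 + C2 :=
      fun s => sum_update_div_sq x m k s
    have eR : ∑ i, (x i) ^ 2 = (x k) ^ 2 + C1 := by
      have := e1 (x k); rwa [Function.update_eq_self] at this
    have eQ : ∑ i, (x i / m i) ^ 2 = (x k / m k) ^ 2 + C2 := by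
      have := e2 (x k); rwa [Function.update_eq_self] at this
    have funeq : (fun s => V (Function.update x k s))
        = fun s => 1 / Real.sqrt (s ^ 2 + C1) - 1 / Real.sqrt ((s / m k) ^ 2 + C2) := by
      funext s; rw [hV, e1, e2]
    rw [funeq]
    have hd := (key_deriv1 C1 hC1 (x k) hx).sub (key_deriv C2 hC2 (m k) (hm k) (x k) hx)
    refine hd.congr_deriv ?_
    rw [hD, abs_of_pos hx, eR, eQ]
    ring
  · constructor
    · -- a.e. nonpositive → m0^3 ≤ mk^2
      intro hae
      by_contra hlt
      push_neg at hlt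
      set W : (Fin 3 → ℝ) → ℝ := fun x =>
        ((m k)⁻¹) ^ 2 / Real.sqrt (∑ i, (x i / m i) ^ 2) ^ 3
          - 1 / Real.sqrt (∑ i, (x i) ^ 2) ^ 3 with hWdef
      set p : Fin 3 → ℝ := ![1, 0, 0] with hpdef
      have hSR : ∑ i, (p i) ^ 2 = 1 := by simp [hpdef, Fin.sum_univ_three]
      have hSQ : ∑ i, (p i / m i) ^ 2 = ((m 0)⁻¹) ^ 2 := by
        simp [hpdef, Fin.sum_univ_three, one_div]
      have hm0 : 0 < m 0 := hm 0
      have hsq : Real.sqrt (((m 0)⁻¹) ^ 2) = (m 0)⁻¹ :=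
        Real.sqrt_sq (inv_nonneg.mpr hm0.le)
      have hWp : 0 < W p := by
        rw [hWdef]
        simp only [hSR, hSQ, hsq, Real.sqrt_one, one_pow]
        rw [sub_pos]
        have he : ((m k)⁻¹) ^ 2 / ((m 0)⁻¹) ^ 3 = (m 0) ^ 3 / (m k) ^ 2 := by
          field_simp
        rw [he, div_one]
        exact (one_lt_div (pow_pos (hm k) 2)).mpr hlt
      have hcQ : Continuous fun x : Fin 3 → ℝ => Real.sqrt (∑ i, (x i / m i) ^ 2) ^ 3 :=
        (Real.continuous_sqrt.comp
          (continuous_finset_sum _ fun i _ => ((continuous_apply i : Continuous fun x : Fin 3 → ℝ => x i).div_const (m i)).pow 2)).pow 3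
      have hcR : Continuous fun x : Fin 3 → ℝ => Real.sqrt (∑ i, (x i) ^ 2) ^ 3 :=
        (Real.continuous_sqrt.comp
          (continuous_finset_sum _ fun i _ => (continuous_apply i).pow 2)).pow 3
      have hneQ : Real.sqrt (∑ i, (p i / m i) ^ 2) ^ 3 ≠ 0 := by
        rw [hSQ, hsq]; positivity
      have hneR : Real.sqrt (∑ i, (p i) ^ 2) ^ 3 ≠ 0 := by
        rw [hSR, Real.sqrt_one]; norm_num
      have hcont : ContinuousAt W p :=
        (continuousAt_const.div hcQ.continuousAt hneQ).sub
          (continuousAt_const.div hcR.continuousAt hneR)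
      have hev : ∀ᶠ x in nhds p, 0 < W x :=
        continuousAt_const.eventually_lt hcont hWp
      obtain ⟨O, hOsub, hOopen, hpO⟩ := mem_nhds_iff.mp hev
      -- find q ∈ O with q k ≠ 0
      obtain ⟨q, hqO, hqk⟩ : ∃ q, q ∈ O ∧ q k ≠ 0 := by
        rcases eq_or_ne (p k) 0 with hpk | hpk
        · have hTop : IsOpen {t : ℝ | Function.update p k t ∈ O} :=
            hOopen.preimage (continuous_const.update k continuous_id)
          have hTmem : {t : ℝ | Function.update p k t ∈ O} ∈ nhds (0 : ℝ) := by
            rw [← hpk]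
            exact hTop.mem_nhds (by simpa [Function.update_eq_self] using hpO)
          have hmem : {t : ℝ | Function.update p k t ∈ O} ∩ {(0 : ℝ)}ᶜ
              ∈ nhdsWithin (0 : ℝ) {(0 : ℝ)}ᶜ :=
            Filter.inter_mem (mem_nhdsWithin_of_mem_nhds hTmem) self_mem_nhdsWithin
          obtain ⟨t, ht, htne⟩ := Filter.nonempty_of_mem hmem
          exact ⟨Function.update p k t, ht, by simpa using htne⟩
        · exact ⟨p, hpO, hpk⟩
      set A : Set (Fin 3 → ℝ) := O ∩ {x | x k ≠ 0} with hAdef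
      have hAopen : IsOpen A :=
        hOopen.inter (isOpen_compl_singleton.preimage (continuous_apply k))
      have hApos : 0 < volume A := hAopen.measure_pos volume ⟨q, hqO, hqk⟩
      have hsub : A ⊆ {x | ¬ D k x ≤ 0} := by
        rintro x ⟨hxO, hxk⟩
        simp only [Set.mem_setOf_eq, not_le]
        have hWx : 0 < W x := hOsub hxO
        have habs : 0 < |x k| := abs_pos.mpr hxk
        have : D k x = |x k| * W x := by rw [hD, hWdef]; ring
        rw [this]
        exact mul_pos habs hWx
      have hzero : volume A = 0 := measure_mono_null hsub (ae_iff.mp hae)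
      exact hApos.ne' hzero
    · -- m0^3 ≤ mk^2 → a.e. (in fact everywhere) nonpositive
      intro hle
      filter_upwards with x
      rw [hD]
      rcases eq_or_ne (x k) 0 with h0 | h0
      · simp [h0]
      set R : ℝ := ∑ i, (x i) ^ 2 with hRdef
      set Q : ℝ := ∑ i, (x i / m i) ^ 2 with hQdef
      have hR : 0 < R := by
        have h1 : 0 < (x k) ^ 2 := by positivity
        have h2 : (x k) ^ 2 ≤ R :=
          Finset.single_le_sum (f := fun i => (x i) ^ 2) (fun i _ => sq_nonneg _)
            (Finset.mem_univ k)
        linarith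
      have hQ : 0 < Q := by
        have hmk := hm k
        have h1 : 0 < (x k / m k) ^ 2 := by positivity
        have h2 : (x k / m k) ^ 2 ≤ Q :=
          Finset.single_le_sum (f := fun i => (x i / m i) ^ 2) (fun i _ => sq_nonneg _)
            (Finset.mem_univ k)
        linarith
      have hQR : ((m 0)⁻¹) ^ 2 * R ≤ Q := by
        rw [hRdef, hQdef, Finset.mul_sum]
        apply Finset.sum_le_sum
        intro i _
        have hmi := hm i
        have hle' : m i ≤ m 0 := hmle i
        rw [div_pow, inv_pow, inv_mul_eq_div]
        exact div_le_div_of_nonneg_left (sq_nonneg _) (pow_pos hmi 2)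
          (pow_le_pow_left₀ hmi.le hle' 2)
      have hm0 : 0 < m 0 := hm 0
      have hmk : 0 < m k := hm k
      have hsR : 0 < Real.sqrt R := Real.sqrt_pos.mpr hR
      have hsQ : 0 < Real.sqrt Q := Real.sqrt_pos.mpr hQ
      -- key: mk⁻² * √R³ ≤ √Q³
      have hcube : ((m k)⁻¹) ^ 4 * R ^ 3 ≤ Q ^ 3 := by
        have h6 : (((m 0)⁻¹) ^ 2 * R) ^ 3 ≤ Q ^ 3 :=
          pow_le_pow_left₀ (by positivity) hQR 3
        have hinv : ((m k) ^ 2)⁻¹ ≤ ((m 0) ^ 3)⁻¹ :=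
          inv_anti₀ (by positivity) hle
        have h7 : ((m k)⁻¹) ^ 4 ≤ ((m 0)⁻¹) ^ 6 := by
          have := pow_le_pow_left₀ (by positivity) hinv 2
          calc ((m k)⁻¹) ^ 4 = (((m k) ^ 2)⁻¹) ^ 2 := by rw [← inv_pow, ← pow_mul]
            _ ≤ (((m 0) ^ 3)⁻¹) ^ 2 := this
            _ = ((m 0)⁻¹) ^ 6 := by rw [← inv_pow, ← pow_mul]
        calc ((m k)⁻¹) ^ 4 * R ^ 3 ≤ ((m 0)⁻¹) ^ 6 * R ^ 3 :=
              mul_le_mul_of_nonneg_right h7 (by positivity)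
          _ = (((m 0)⁻¹) ^ 2 * R) ^ 3 := by ring
          _ ≤ Q ^ 3 := h6
      have key3 : ((m k)⁻¹) ^ 2 * Real.sqrt R ^ 3 ≤ Real.sqrt Q ^ 3 := by
        have hL : (((m k)⁻¹) ^ 2 * Real.sqrt R ^ 3) ^ 2 = ((m k)⁻¹) ^ 4 * R ^ 3 := by
          have : Real.sqrt R ^ 2 = R := Real.sq_sqrt hR.le
          calc (((m k)⁻¹) ^ 2 * Real.sqrt R ^ 3) ^ 2
              = ((m k)⁻¹) ^ 4 * (Real.sqrt R ^ 2) ^ 3 := by ring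
            _ = ((m k)⁻¹) ^ 4 * R ^ 3 := by rw [this]
        have hRQ : (Real.sqrt Q ^ 3) ^ 2 = Q ^ 3 := by
          have : Real.sqrt Q ^ 2 = Q := Real.sq_sqrt hQ.le
          calc (Real.sqrt Q ^ 3) ^ 2 = (Real.sqrt Q ^ 2) ^ 3 := by ring
            _ = Q ^ 3 := by rw [this]
        have hsq2 : (((m k)⁻¹) ^ 2 * Real.sqrt R ^ 3) ^ 2 ≤ (Real.sqrt Q ^ 3) ^ 2 := by
          rw [hL, hRQ]; exact hcube
        have := Real.sqrt_le_sqrt hsq2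
        rwa [Real.sqrt_sq (by positivity), Real.sqrt_sq (by positivity)] at this
      rw [sub_nonpos, div_le_div_iff₀ (by positivity) (by positivity)]
      calc ((m k)⁻¹) ^ 2 * |x k| * Real.sqrt R ^ 3
          = |x k| * (((m k)⁻¹) ^ 2 * Real.sqrt R ^ 3) := by ring
        _ ≤ |x k| * Real.sqrt Q ^ 3 := mul_le_mul_of_nonneg_left key3 (abs_nonneg _)
end

section
/- For (θ,t) ∈ ℝ × [0,1] with (θ,t) ≠ (0,1), the Fourier cosine coefficients of θ ↦ (1 − 2t cosθ + t²)^{-1/2} are all strictly positive when t ∈ (0,1): writing (1−2t cosθ+t²)^{-1/2} = Σ_{n≥0} c_n(t) cos(nθ), one has c_n(t) = Σ_{k : k ≡ n mod 2, k ≥ n} β_{n,k} t^k with β_{n,k} > 0 explicitly given by products of central binomial coefficients; in particular c_n(t) > 0 for all n ≥ 0 and t ∈ (0,1). -/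
/-- The coefficients `β_{n,k}` (products of central binomial coefficients), nonzero
exactly when `k ≥ n` and `k ≡ n (mod 2)`. -/
noncomputable def betaCoef (n k : ℕ) : ℝ :=
  if n ≤ k ∧ k % 2 = n % 2 then
    (if n = 0 then 1 else 2) * (Nat.choose (k + n) ((k + n) / 2)) *
      (Nat.choose (k - n) ((k - n) / 2)) / 2 ^ (2 * k)
  else 0

open Finset intervalIntegral MeasureTheory Complex

noncomputable def aC (k : ℕ) : ℝ := (Nat.centralBinom k : ℝ) / 4 ^ k

lemma aC_pos (k : ℕ) : 0 < aC k := by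
  apply div_pos (by exact_mod_cast Nat.centralBinom_pos k) (by positivity)

lemma choose_le_two_pow (n k : ℕ) : Nat.choose n k ≤ 2 ^ n := by
  rcases le_or_gt k n with h | h
  · calc Nat.choose n k ≤ ∑ m ∈ range (n+1), n.choose m :=
        Finset.single_le_sum (f := fun m => n.choose m) (fun _ _ => Nat.zero_le _)
          (Finset.mem_range.mpr (Nat.lt_succ_of_le h))
    _ = 2 ^ n := Nat.sum_range_choose n
  · simp [Nat.choose_eq_zero_of_lt h]

lemma centralBinom_le (k : ℕ) : Nat.centralBinom k ≤ 4 ^ k := by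
  have := choose_le_two_pow (2 * k) k
  rw [Nat.centralBinom_eq_two_mul_choose]
  calc Nat.choose (2*k) k ≤ 2 ^ (2*k) := this
  _ = 4 ^ k := by rw [pow_mul]; norm_num

lemma aC_le_one (k : ℕ) : aC k ≤ 1 := by
  rw [aC, div_le_one (by positivity)]
  exact_mod_cast centralBinom_le k

lemma aC_rec (k : ℕ) : 2 * (k+1 : ℝ) * aC (k+1) = (2*k+1 : ℝ) * aC k := by
  have h := Nat.succ_mul_centralBinom_succ k
  have h' : ((k+1) * (k+1).centralBinom : ℝ) = 2 * (2*k+1) * k.centralBinom := by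
    exact_mod_cast h
  rw [aC, aC]
  field_simp
  rw [pow_succ]
  push_cast at h' ⊢
  linear_combination (2 * (4:ℝ)^k) * h'

lemma aC_conv (k : ℕ) : ∑ i ∈ range (k+1), aC i * aC (k - i) = 1 := by
  induction k with
  | zero => simp [aC, Nat.centralBinom]
  | succ k ih =>
    have key : (2*(k:ℝ)+2) * ∑ i ∈ range (k+2), aC i * aC (k+1-i)
        = (2*(k:ℝ)+2) * ∑ i ∈ range (k+1), aC i * aC (k-i) := by
      -- LHS: (k+1) * c_{k+1} = sum (2i+1) a_i a_{k-i}
      have l1 : ((k:ℝ)+1) * ∑ i ∈ range (k+2), aC i * aC (k+1-i)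
          = ∑ i ∈ range (k+2), ((i:ℝ) + ((k+1-i : ℕ):ℝ)) * (aC i * aC (k+1-i)) := by
        rw [Finset.mul_sum]
        apply Finset.sum_congr rfl
        intro i hi
        have hik : i ≤ k + 1 := Nat.lt_succ_iff.mp (Finset.mem_range.mp hi)
        have : ((k+1-i : ℕ):ℝ) = (k:ℝ) + 1 - i := by
          push_cast [Nat.cast_sub hik]; ring
        rw [this]; ring
      have l2 : ∑ i ∈ range (k+2), ((i:ℝ)) * (aC i * aC (k+1-i))
          = ∑ i ∈ range (k+2), ((k+1-i : ℕ):ℝ) * (aC i * aC (k+1-i)) := by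
        rw [← Finset.sum_range_reflect]
        apply Finset.sum_congr rfl
        intro i hi
        have hik : i ≤ k + 1 := Nat.lt_succ_iff.mp (Finset.mem_range.mp hi)
        have e1 : k + 2 - 1 - i = k + 1 - i := by omega
        have e2 : k + 1 - (k + 1 - i) = i := by omega
        rw [e1, e2]
        ring
      have l3 : ∑ i ∈ range (k+2), ((i:ℝ)) * (aC i * aC (k+1-i))
          = ∑ i ∈ range (k+1), ((i:ℝ)+1) * (aC (i+1) * aC (k-i)) := by
        rw [Finset.sum_range_succ' (fun i => ((i:ℝ)) * (aC i * aC (k+1-i))) (k+1)]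
        simp only [Nat.cast_zero, zero_mul, add_zero]
        apply Finset.sum_congr rfl
        intro i hi
        have : k + 1 - (i + 1) = k - i := by omega
        rw [this]
        push_cast; ring
      have l4 : ∀ i : ℕ, ((i:ℝ)+1) * (aC (i+1) * aC (k-i)) = ((2*i+1:ℝ))/2 * (aC i * aC (k-i)) := by
        intro i
        have h := aC_rec i
        linear_combination (aC (k - i) / 2) * h
      -- RHS similarly
      have r1 : (2*(k:ℝ)+2) * ∑ i ∈ range (k+1), aC i * aC (k-i)
          = ∑ i ∈ range (k+1), ((2*(i:ℝ)+1) + (2*((k-i:ℕ):ℝ)+1)) * (aC i * aC (k-i)) := by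
        rw [Finset.mul_sum]
        apply Finset.sum_congr rfl
        intro i hi
        have hik : i ≤ k := Nat.lt_succ_iff.mp (Finset.mem_range.mp hi)
        have : ((k-i : ℕ):ℝ) = (k:ℝ) - i := by
          push_cast [Nat.cast_sub hik]; ring
        rw [this]; ring
      have r2 : ∑ i ∈ range (k+1), (2*((k-i:ℕ):ℝ)+1) * (aC i * aC (k-i))
          = ∑ i ∈ range (k+1), (2*(i:ℝ)+1) * (aC i * aC (k-i)) := by
        rw [← Finset.sum_range_reflect]
        apply Finset.sum_congr rfl
        intro i hi
        have hik : i ≤ k := Nat.lt_succ_iff.mp (Finset.mem_range.mp hi)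
        have e1 : k + 1 - 1 - i = k - i := by omega
        have e2 : k - (k - i) = i := by omega
        rw [e1, e2]
        ring
      calc (2*(k:ℝ)+2) * ∑ i ∈ range (k+2), aC i * aC (k+1-i)
          = 2 * (((k:ℝ)+1) * ∑ i ∈ range (k+2), aC i * aC (k+1-i)) := by ring
        _ = 2 * ∑ i ∈ range (k+2), ((i:ℝ) + ((k+1-i : ℕ):ℝ)) * (aC i * aC (k+1-i)) := by rw [l1]
        _ = 2 * (∑ i ∈ range (k+2), ((i:ℝ)) * (aC i * aC (k+1-i))
              + ∑ i ∈ range (k+2), ((k+1-i : ℕ):ℝ) * (aC i * aC (k+1-i))) := by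
            rw [← Finset.sum_add_distrib]
            congr 1
            apply Finset.sum_congr rfl
            intro i _; ring
        _ = 4 * ∑ i ∈ range (k+2), ((i:ℝ)) * (aC i * aC (k+1-i)) := by rw [← l2]; ring
        _ = 4 * ∑ i ∈ range (k+1), ((2*i+1:ℝ))/2 * (aC i * aC (k-i)) := by
            rw [l3]
            congr 1
            exact Finset.sum_congr rfl (fun i _ => l4 i)
        _ = 2 * ∑ i ∈ range (k+1), (2*(i:ℝ)+1) * (aC i * aC (k-i)) := by
            rw [Finset.mul_sum, Finset.mul_sum]
            apply Finset.sum_congr rfl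
            intro i _; ring
        _ = ∑ i ∈ range (k+1), ((2*(i:ℝ)+1) + (2*((k-i:ℕ):ℝ)+1)) * (aC i * aC (k-i)) := by
            rw [two_mul]
            nth_rewrite 2 [← r2]
            rw [← Finset.sum_add_distrib]
            apply Finset.sum_congr rfl
            intro i _; ring
        _ = (2*(k:ℝ)+2) * ∑ i ∈ range (k+1), aC i * aC (k-i) := r1.symm
    have hne : (2*(k:ℝ)+2) ≠ 0 := by positivity
    have := mul_left_cancel₀ hne key
    rw [this, ih]


noncomputable def G (t : ℝ) (k : ℕ) (θ : ℝ) : ℝ :=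
  ∑ i ∈ range (k+1), aC i * aC (k-i) * t^k * Real.cos (((i:ℝ) - ((k-i : ℕ):ℝ)) * θ)

lemma summable_norm_term {z : ℂ} (hz : ‖z‖ < 1) :
    Summable (fun k => ‖(aC k : ℂ) * z ^ k‖) := by
  apply Summable.of_nonneg_of_le (fun k => norm_nonneg _)
    (fun k => ?_) (summable_geometric_of_lt_one (norm_nonneg z) hz)
  rw [norm_mul, norm_pow]
  calc ‖(aC k : ℂ)‖ * ‖z‖ ^ k ≤ 1 * ‖z‖ ^ k := by
        apply mul_le_mul_of_nonneg_right _ (by positivity)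
        rw [Complex.norm_real, Real.norm_eq_abs, abs_of_pos (aC_pos k)]
        exact aC_le_one k
    _ = ‖z‖ ^ k := one_mul _

lemma SC_mul {z w : ℂ} (hz : ‖z‖ < 1) (hw : ‖w‖ < 1) :
    (∑' k, (aC k : ℂ) * z ^ k) * (∑' k, (aC k : ℂ) * w ^ k)
      = ∑' k : ℕ, ∑ i ∈ range (k+1), ((aC i : ℂ) * z ^ i) * ((aC (k-i) : ℂ) * w ^ (k-i)) :=
  tsum_mul_tsum_eq_tsum_sum_range_of_summable_norm (summable_norm_term hz) (summable_norm_term hw)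

lemma SC_sq {z : ℂ} (hz : ‖z‖ < 1) :
    (∑' k, (aC k : ℂ) * z ^ k) * (∑' k, (aC k : ℂ) * z ^ k) = (1 - z)⁻¹ := by
  rw [SC_mul hz hz]
  have : ∀ k : ℕ, ∑ i ∈ range (k+1), ((aC i : ℂ) * z ^ i) * ((aC (k-i) : ℂ) * z ^ (k-i))
      = z ^ k := by
    intro k
    have h : ∀ i ∈ range (k+1), ((aC i : ℂ) * z ^ i) * ((aC (k-i) : ℂ) * z ^ (k-i))
        = ((aC i * aC (k-i) : ℝ) : ℂ) * z ^ k := by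
      intro i hi
      have hik : i ≤ k := Nat.lt_succ_iff.mp (Finset.mem_range.mp hi)
      have hzz : z ^ i * z ^ (k - i) = z ^ k := by rw [← pow_add, Nat.add_sub_cancel' hik]
      rw [mul_mul_mul_comm, hzz]
      push_cast
      ring
    rw [Finset.sum_congr rfl h, ← Finset.sum_mul, ← Complex.ofReal_sum]
    rw [aC_conv k]
    simp
  rw [tsum_congr this, tsum_geometric_of_norm_lt_one hz]

lemma Q_pos {t : ℝ} (ht : t ∈ Set.Ioo (0:ℝ) 1) (θ : ℝ) :
    0 < 1 - 2 * t * Real.cos θ + t ^ 2 := by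
  nlinarith [Real.neg_one_le_cos θ, Real.cos_le_one θ, ht.1, ht.2, sq_nonneg (1 - t),
    sq_nonneg (t - Real.cos θ)]

lemma normSq_one_sub {t θ : ℝ} :
    Complex.normSq (1 - (t : ℂ) * Complex.exp (θ * Complex.I))
      = 1 - 2 * t * Real.cos θ + t ^ 2 := by
  rw [Complex.exp_mul_I]
  simp [Complex.normSq_apply, Complex.cos_ofReal_re, Complex.sin_ofReal_re]
  nlinarith [Real.sin_sq_add_cos_sq θ]

lemma norm_z {t θ : ℝ} (ht : t ∈ Set.Ioo (0:ℝ) 1) :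
    ‖(t : ℂ) * Complex.exp (θ * Complex.I)‖ < 1 := by
  have h1 : ‖Complex.exp ((θ:ℂ) * Complex.I)‖ = 1 := by
    rw [Complex.norm_exp]; simp
  rw [norm_mul, h1, mul_one, Complex.norm_real, Real.norm_eq_abs, abs_of_pos ht.1]
  exact ht.2

set_option maxHeartbeats 1000000 in
lemma hasSum_G {t : ℝ} (ht : t ∈ Set.Ioo (0:ℝ) 1) (θ : ℝ) :
    HasSum (fun k => G t k θ) ((Real.sqrt (1 - 2 * t * Real.cos θ + t ^ 2))⁻¹) := by
  set z : ℂ := (t : ℂ) * Complex.exp (θ * Complex.I) with hzdef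
  have hz : ‖z‖ < 1 := norm_z ht
  have hzb : ‖(starRingEnd ℂ) z‖ < 1 := by rwa [RCLike.norm_conj]
  set S : ℂ := ∑' k, (aC k : ℂ) * z ^ k with hS
  have hstar : (starRingEnd ℂ) S = ∑' k, (aC k : ℂ) * ((starRingEnd ℂ) z) ^ k := by
    rw [hS]
    rw [show ((starRingEnd ℂ) (∑' (k : ℕ), (aC k : ℂ) * z ^ k))
        = star (∑' (k : ℕ), (aC k : ℂ) * z ^ k) from rfl, tsum_star]
    apply tsum_congr
    intro k
    rw [star_mul', star_pow]
    congr 1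
    simp [Complex.star_def, Complex.conj_ofReal]
  have hmc : S * (starRingEnd ℂ) S = (Complex.normSq S : ℂ) := Complex.mul_conj S
  have hsq : ((Complex.normSq S : ℝ))^2 = ((1 - 2 * t * Real.cos θ + t ^ 2))⁻¹ := by
    have h1 : (S * (starRingEnd ℂ) S) ^ 2 = ((1-z) * (1 - (starRingEnd ℂ) z))⁻¹ := by
      rw [mul_pow, sq, sq, hstar, hS, SC_sq hz, SC_sq hzb, mul_inv]
    have h2 : (1-z) * (1 - (starRingEnd ℂ) z) = ((1 - 2 * t * Real.cos θ + t ^ 2 : ℝ) : ℂ) := by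
      have e : (1 : ℂ) - (starRingEnd ℂ) z = (starRingEnd ℂ) (1 - z) := by simp
      rw [e, Complex.mul_conj]
      exact_mod_cast congrArg (Complex.ofReal) (normSq_one_sub (t := t) (θ := θ))
    rw [hmc, h2] at h1
    rw [← Complex.ofReal_pow, ← Complex.ofReal_inv] at h1
    exact_mod_cast h1
  have hnn : 0 ≤ Complex.normSq S := Complex.normSq_nonneg S
  have hval : Complex.normSq S = (Real.sqrt (1 - 2 * t * Real.cos θ + t ^ 2))⁻¹ := by
    rw [← Real.sqrt_inv, ← hsq, Real.sqrt_sq hnn]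
  have hsum1 : Summable (fun k => ‖∑ i ∈ range (k+1), ((aC i : ℂ) * z ^ i) * ((aC (k-i) : ℂ) * ((starRingEnd ℂ) z) ^ (k-i))‖) :=
    summable_norm_sum_mul_range_of_summable_norm (f := fun i => (aC i : ℂ) * z ^ i)
      (g := fun i => (aC i : ℂ) * ((starRingEnd ℂ) z) ^ i)
      (summable_norm_term hz) (summable_norm_term hzb)
  have hsum : Summable (fun k : ℕ => ∑ i ∈ range (k+1), ((aC i : ℂ) * z ^ i) * ((aC (k-i) : ℂ) * ((starRingEnd ℂ) z) ^ (k-i))) :=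
    hsum1.of_norm
  have heq : S * (starRingEnd ℂ) S
      = ∑' k : ℕ, ∑ i ∈ range (k+1), ((aC i : ℂ) * z ^ i) * ((aC (k-i) : ℂ) * ((starRingEnd ℂ) z) ^ (k-i)) := by
    rw [hS, hstar]
    exact SC_mul hz hzb
  have hterm : ∀ k, (∑ i ∈ range (k+1), ((aC i : ℂ) * z ^ i) * ((aC (k-i) : ℂ) * ((starRingEnd ℂ) z) ^ (k-i))).re = G t k θ := by
    intro k
    rw [Complex.re_sum, G]
    apply Finset.sum_congr rfl
    intro i hi
    have hik : i ≤ k := Nat.lt_succ_iff.mp (Finset.mem_range.mp hi)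
    have hzi : z ^ i = ((t:ℂ))^i * Complex.exp ((i : ℂ) * (θ * Complex.I)) := by
      rw [hzdef, mul_pow, Complex.exp_nat_mul]
    have hzbj : ((starRingEnd ℂ) z) ^ (k-i) = ((t:ℂ))^(k-i) * Complex.exp (-((k-i : ℕ) : ℂ) * (θ * Complex.I)) := by
      rw [hzdef, map_mul, mul_pow]
      congr 1
      · simp
      · rw [← Complex.exp_conj]
        have e : (starRingEnd ℂ) ((θ:ℂ) * Complex.I) = -(θ * Complex.I) := by simp
        rw [e, show (-((k-i : ℕ) : ℂ) * ((θ:ℂ) * Complex.I)) = ((k-i : ℕ) : ℂ) * (-((θ:ℂ) * Complex.I)) by ring,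
          Complex.exp_nat_mul]
    have hexp : Complex.exp ((i : ℂ) * (θ * Complex.I)) * Complex.exp (-((k-i : ℕ) : ℂ) * (θ * Complex.I))
        = Complex.exp ((((i:ℝ) - ((k-i:ℕ):ℝ)) * θ : ℝ) * Complex.I) := by
      rw [← Complex.exp_add]
      congr 1
      push_cast
      ring
    have hre : (((aC i : ℂ)) * ((t:ℂ))^i * (((aC (k-i) : ℂ)) * ((t:ℂ))^(k-i)) *
        Complex.exp ((((i:ℝ) - ((k-i:ℕ):ℝ)) * θ : ℝ) * Complex.I)).re
        = aC i * t^i * (aC (k-i) * t^(k-i)) * Real.cos (((i:ℝ) - ((k-i:ℕ):ℝ)) * θ) := by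
      rw [← Complex.ofReal_pow, ← Complex.ofReal_pow, ← Complex.ofReal_mul, ← Complex.ofReal_mul,
        ← Complex.ofReal_mul, Complex.re_ofReal_mul, Complex.exp_ofReal_mul_I_re]
    calc ((aC i : ℂ) * z ^ i * ((aC (k-i) : ℂ) * ((starRingEnd ℂ) z) ^ (k-i))).re
        = (((aC i : ℂ)) * ((t:ℂ))^i * (((aC (k-i) : ℂ)) * ((t:ℂ))^(k-i)) *
            Complex.exp ((((i:ℝ) - ((k-i:ℕ):ℝ)) * θ : ℝ) * Complex.I)).re := by
          rw [hzi, hzbj, ← hexp]; ring_nf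
      _ = aC i * t^i * (aC (k-i) * t^(k-i)) * Real.cos (((i:ℝ) - ((k-i:ℕ):ℝ)) * θ) := hre
      _ = aC i * aC (k-i) * t^k * Real.cos (((i:ℝ) - ((k-i:ℕ):ℝ)) * θ) := by
          rw [show aC i * t^i * (aC (k-i) * t^(k-i)) = aC i * aC (k-i) * (t^i * t^(k-i)) by ring,
            ← pow_add, Nat.add_sub_cancel' hik]
  have hre : HasSum (fun k => (∑ i ∈ range (k+1), ((aC i : ℂ) * z ^ i) * ((aC (k-i) : ℂ) * ((starRingEnd ℂ) z) ^ (k-i))).re)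
      ((S * (starRingEnd ℂ) S).re) := by
    rw [heq]
    exact (Complex.hasSum_re hsum.hasSum)
  rw [hmc] at hre
  simp only [Complex.ofReal_re] at hre
  rw [hval] at hre
  rw [show (fun k => G t k θ) = (fun k => (∑ i ∈ range (k+1), ((aC i : ℂ) * z ^ i) * ((aC (k-i) : ℂ) * ((starRingEnd ℂ) z) ^ (k-i))).re) from funext (fun k => (hterm k).symm)]
  exact hre


lemma integral_cos_int (c : ℤ) : ∫ θ in (0:ℝ)..Real.pi, Real.cos ((c:ℝ)*θ)
    = if c = 0 then Real.pi else 0 := by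
  rcases eq_or_ne c 0 with rfl | hc
  · simp
  · rw [if_neg hc]
    have hc' : ((c:ℝ)) ≠ 0 := Int.cast_ne_zero.mpr hc
    rw [intervalIntegral.integral_comp_mul_left Real.cos hc']
    simp [Real.sin_int_mul_pi]

lemma orth (n : ℕ) (m : ℤ) : (∫ θ in (0:ℝ)..Real.pi, Real.cos (n*θ) * Real.cos ((m:ℝ)*θ))
    = (Real.pi/2) * ((if m = n then 1 else 0) + (if m = -n then 1 else 0)) := by
  have hint : ∀ c : ℤ, IntervalIntegrable (fun θ => Real.cos ((c:ℝ)*θ)) MeasureTheory.volume 0 Real.pi := by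
    intro c; exact (Real.continuous_cos.comp (continuous_const.mul continuous_id)).intervalIntegrable 0 Real.pi
  have key : (fun θ => Real.cos (n*θ) * Real.cos ((m:ℝ)*θ))
      = fun θ => (Real.cos ((((n:ℤ) - m : ℤ):ℝ)*θ) + Real.cos ((((n:ℤ) + m : ℤ):ℝ)*θ)) / 2 := by
    funext θ
    have h1 : (((n:ℤ) - m : ℤ):ℝ)*θ = (n:ℝ)*θ - (m:ℝ)*θ := by push_cast; ring
    have h2 : (((n:ℤ) + m : ℤ):ℝ)*θ = (n:ℝ)*θ + (m:ℝ)*θ := by push_cast; ring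
    rw [h1, h2, Real.cos_sub, Real.cos_add]
    ring
  rw [key]
  rw [intervalIntegral.integral_div]
  rw [intervalIntegral.integral_add (hint _) (hint _)]
  rw [integral_cos_int, integral_cos_int]
  have e1 : ((n:ℤ) - m = 0) ↔ (m = n) := by omega
  have e2 : ((n:ℤ) + m = 0) ↔ (m = -n) := by omega
  simp only [e1, e2]
  split_ifs <;> ring


lemma L3 (n k : ℕ) (t : ℝ) :
    ((if n = 0 then (1:ℝ) else 2) / Real.pi) *
      (∫ θ in (0:ℝ)..Real.pi, Real.cos (n*θ) * G t k θ) = betaCoef n k * t^k := by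
  have hπ : (0:ℝ) < Real.pi := Real.pi_pos
  -- compute the integral of cos(nθ) * G
  have hswap : (∫ θ in (0:ℝ)..Real.pi, Real.cos (n*θ) * G t k θ)
      = ∑ i ∈ range (k+1), aC i * aC (k-i) * t^k *
          ((Real.pi/2) * ((if 2*(i:ℤ) - k = n then 1 else 0) + (if 2*(i:ℤ) - k = -(n:ℤ) then 1 else 0))) := by
    have : (fun θ => Real.cos (n*θ) * G t k θ)
        = fun θ => ∑ i ∈ range (k+1),
            aC i * aC (k-i) * t^k * (Real.cos (n*θ) * Real.cos ((((2*(i:ℤ) - k : ℤ)):ℝ) * θ)) := by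
      funext θ
      rw [G, Finset.mul_sum]
      apply Finset.sum_congr rfl
      intro i hi
      have hik : i ≤ k := Nat.lt_succ_iff.mp (Finset.mem_range.mp hi)
      have : ((i:ℝ) - ((k-i : ℕ):ℝ)) = (((2*(i:ℤ) - k : ℤ)):ℝ) := by
        push_cast [Nat.cast_sub hik]
        ring
      rw [this]
      ring
    rw [this, intervalIntegral.integral_finset_sum]
    · apply Finset.sum_congr rfl
      intro i _
      rw [intervalIntegral.integral_const_mul, orth n (2*(i:ℤ) - k)]
    · intro i _
      apply Continuous.intervalIntegrable
      fun_prop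
  rw [hswap]
  by_cases h : n ≤ k ∧ k % 2 = n % 2
  · -- the two indicator sums pick out i = (k+n)/2 and i = (k-n)/2
    obtain ⟨hnk, hpar⟩ := h
    have hsum : ∑ i ∈ range (k+1), aC i * aC (k-i) * t^k *
          ((Real.pi/2) * ((if 2*(i:ℤ) - k = n then 1 else 0) + (if 2*(i:ℤ) - k = -(n:ℤ) then 1 else 0)))
        = (Real.pi/2) * t^k * (2 * (aC ((k+n)/2) * aC ((k-n)/2))) := by
      have split : ∀ i, aC i * aC (k-i) * t^k *
            ((Real.pi/2) * ((if 2*(i:ℤ) - k = n then 1 else 0) + (if 2*(i:ℤ) - k = -(n:ℤ) then 1 else 0)))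
          = (Real.pi/2) * t^k * (aC i * aC (k-i)) * (if 2*(i:ℤ) - k = n then 1 else 0)
            + (Real.pi/2) * t^k * (aC i * aC (k-i)) * (if 2*(i:ℤ) - k = -(n:ℤ) then 1 else 0) := by
        intro i; ring
      rw [Finset.sum_congr rfl (fun i _ => split i), Finset.sum_add_distrib]
      have s1 : ∑ i ∈ range (k+1), (Real.pi/2) * t^k * (aC i * aC (k-i)) * (if 2*(i:ℤ) - k = n then 1 else 0)
          = (Real.pi/2) * t^k * (aC ((k+n)/2) * aC ((k-n)/2)) := by
        rw [Finset.sum_eq_single_of_mem ((k+n)/2) (Finset.mem_range.mpr (by omega))]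
        · rw [if_pos (by omega), mul_one]
          have e : k - (k+n)/2 = (k-n)/2 := by omega
          rw [e]
        · intro i _ hne
          rw [if_neg (by omega), mul_zero]
      have s2 : ∑ i ∈ range (k+1), (Real.pi/2) * t^k * (aC i * aC (k-i)) * (if 2*(i:ℤ) - k = -(n:ℤ) then 1 else 0)
          = (Real.pi/2) * t^k * (aC ((k-n)/2) * aC ((k+n)/2)) := by
        rw [Finset.sum_eq_single_of_mem ((k-n)/2) (Finset.mem_range.mpr (by omega))]
        · rw [if_pos (by omega), mul_one]
          have e : k - (k-n)/2 = (k+n)/2 := by omega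
          rw [e]
        · intro i _ hne
          rw [if_neg (by omega), mul_zero]
      rw [s1, s2]
      ring
    rw [hsum, betaCoef, if_pos (show n ≤ k ∧ k % 2 = n % 2 from ⟨hnk, hpar⟩)]
    -- now the numeric identity
    have ha : aC ((k+n)/2) = (Nat.choose (k+n) ((k+n)/2) : ℝ) / 4 ^ ((k+n)/2) := by
      have e : 2 * ((k+n)/2) = k + n := by omega
      rw [aC, Nat.centralBinom_eq_two_mul_choose, e]
    have hb : aC ((k-n)/2) = (Nat.choose (k-n) ((k-n)/2) : ℝ) / 4 ^ ((k-n)/2) := by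
      have e : 2 * ((k-n)/2) = k - n := by omega
      rw [aC, Nat.centralBinom_eq_two_mul_choose, e]
    have hpow : (4:ℝ) ^ ((k+n)/2) * 4 ^ ((k-n)/2) = 2 ^ (2*k) := by
      rw [← pow_add]
      rw [show (4:ℝ) = 2^2 by norm_num, ← pow_mul]
      congr 1
      omega
    rw [ha, hb]
    have h4a : (0:ℝ) < 4 ^ ((k+n)/2) := by positivity
    have h4b : (0:ℝ) < 4 ^ ((k-n)/2) := by positivity
    field_simp
    rw [← hpow]
    by_cases hn : n = 0 <;> ring
  · -- all indicators vanish and betaCoef = 0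
    rw [betaCoef, if_neg h]
    rw [Finset.sum_eq_zero, mul_zero, zero_mul]
    intro i hi
    have hik : i ≤ k := Nat.lt_succ_iff.mp (Finset.mem_range.mp hi)
    rw [if_neg (by omega), if_neg (by omega)]
    simp


lemma G_bound {t : ℝ} (ht : t ∈ Set.Ioo (0:ℝ) 1) (k : ℕ) (θ : ℝ) : |G t k θ| ≤ t ^ k := by
  have h1 : |G t k θ| ≤ ∑ i ∈ range (k+1), |aC i * aC (k-i) * t^k * Real.cos (((i:ℝ) - ((k-i : ℕ):ℝ)) * θ)| :=
    Finset.abs_sum_le_sum_abs _ _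
  have h2 : ∀ i ∈ range (k+1), |aC i * aC (k-i) * t^k * Real.cos (((i:ℝ) - ((k-i : ℕ):ℝ)) * θ)|
      ≤ aC i * aC (k-i) * t^k := by
    intro i _
    rw [abs_mul]
    have e : |aC i * aC (k-i) * t^k| = aC i * aC (k-i) * t^k :=
      abs_of_pos (mul_pos (mul_pos (aC_pos i) (aC_pos (k-i))) (pow_pos ht.1 k))
    rw [e]
    have := Real.abs_cos_le_one (((i:ℝ) - ((k-i : ℕ):ℝ)) * θ)
    nlinarith [mul_pos (mul_pos (aC_pos i) (aC_pos (k-i))) (pow_pos ht.1 k)]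
  calc |G t k θ| ≤ ∑ i ∈ range (k+1), aC i * aC (k-i) * t^k :=
        h1.trans (Finset.sum_le_sum h2)
    _ = (∑ i ∈ range (k+1), aC i * aC (k-i)) * t^k := by rw [Finset.sum_mul]
    _ = t ^ k := by rw [aC_conv k, one_mul]

lemma G_cont (t : ℝ) (n k : ℕ) : Continuous (fun θ => Real.cos (n*θ) * G t k θ) := by
  apply Continuous.mul
  · fun_prop
  · unfold G
    apply continuous_finset_sum
    intro i _
    fun_prop

lemma swap_lemma (n : ℕ) {t : ℝ} (ht : t ∈ Set.Ioo (0:ℝ) 1) :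
    (∫ θ in (0:ℝ)..Real.pi, Real.cos (n*θ) / Real.sqrt (1 - 2 * t * Real.cos θ + t ^ 2))
      = ∑' k : ℕ, ∫ θ in (0:ℝ)..Real.pi, Real.cos (n*θ) * G t k θ := by
  have hπ := Real.pi_pos
  have hle : (0:ℝ) ≤ Real.pi := hπ.le
  -- rewrite integrand as tsum
  have hpt : ∀ θ : ℝ, Real.cos (n*θ) / Real.sqrt (1 - 2 * t * Real.cos θ + t ^ 2)
      = ∑' k : ℕ, Real.cos (n*θ) * G t k θ := by
    intro θ
    have h := (hasSum_G ht θ).mul_left (Real.cos (n*θ))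
    rw [div_eq_mul_inv, ← h.tsum_eq]
  -- convert to set integrals
  rw [intervalIntegral.integral_of_le hle]
  have : ∀ k:ℕ, (∫ θ in (0:ℝ)..Real.pi, Real.cos (n*θ) * G t k θ)
      = ∫ θ in Set.Ioc (0:ℝ) Real.pi, Real.cos (n*θ) * G t k θ := fun k =>
    intervalIntegral.integral_of_le hle
  rw [tsum_congr this]
  rw [show (fun θ => Real.cos (n*θ) / Real.sqrt (1 - 2 * t * Real.cos θ + t ^ 2))
      = fun θ => ∑' k : ℕ, Real.cos (n*θ) * G t k θ from funext hpt]
  symm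
  apply MeasureTheory.integral_tsum_of_summable_integral_norm
  · intro k
    exact (G_cont t n k).integrableOn_Ioc
  · apply Summable.of_nonneg_of_le (fun k => integral_nonneg (fun θ => norm_nonneg _))
      (fun k => ?_) ((summable_geometric_of_lt_one ht.1.le ht.2).mul_left Real.pi)
    have hbd : ∀ θ ∈ Set.Ioc (0:ℝ) Real.pi, ‖Real.cos (n*θ) * G t k θ‖ ≤ t ^ k := by
      intro θ _
      rw [norm_mul]
      calc ‖Real.cos (n*θ)‖ * ‖G t k θ‖ ≤ 1 * t ^ k := by
            apply mul_le_mul _ _ (norm_nonneg _) zero_le_one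
            · rw [Real.norm_eq_abs]; exact Real.abs_cos_le_one _
            · rw [Real.norm_eq_abs]; exact G_bound ht k θ
        _ = t ^ k := one_mul _
    calc (∫ θ in Set.Ioc (0:ℝ) Real.pi, ‖Real.cos (n*θ) * G t k θ‖)
        ≤ ∫ θ in Set.Ioc (0:ℝ) Real.pi, t ^ k := by
          apply MeasureTheory.setIntegral_mono_on
          · exact ((G_cont t n k).norm).integrableOn_Ioc
          · exact (integrableOn_const_iff (C := t ^ k)).mpr (Or.inr (by simp [Real.pi_pos]))
          · exact measurableSet_Ioc
          · exact hbd
      _ = Real.pi * t ^ k := by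
          rw [MeasureTheory.setIntegral_const]
          simp [Real.volume_Ioc, ENNReal.toReal_ofReal hle, smul_eq_mul, hle]

lemma beta_nonneg (n k : ℕ) : 0 ≤ betaCoef n k := by
  rw [betaCoef]
  split_ifs <;> positivity

lemma beta_le_two (n k : ℕ) : betaCoef n k ≤ 2 := by
  rw [betaCoef]
  have c1 : (Nat.choose (k+n) ((k+n)/2) : ℝ) ≤ 2 ^ (k+n) := by
    exact_mod_cast choose_le_two_pow (k+n) ((k+n)/2)
  have c2 : (Nat.choose (k-n) ((k-n)/2) : ℝ) ≤ 2 ^ (k-n) := by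
    exact_mod_cast choose_le_two_pow (k-n) ((k-n)/2)
  have c0 : (0:ℝ) ≤ (Nat.choose (k+n) ((k+n)/2) : ℝ) := Nat.cast_nonneg _
  have c0' : (0:ℝ) ≤ (Nat.choose (k-n) ((k-n)/2) : ℝ) := Nat.cast_nonneg _
  have hpw : (0:ℝ) < 2 ^ (2*k) := by positivity
  split_ifs with h hn
  all_goals try norm_num
  all_goals {
    obtain ⟨hnk, -⟩ := h
    have hcc : (Nat.choose (k+n) ((k+n)/2) : ℝ) * (Nat.choose (k-n) ((k-n)/2) : ℝ) ≤ 2 ^ (2*k) := by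
      calc (Nat.choose (k+n) ((k+n)/2) : ℝ) * (Nat.choose (k-n) ((k-n)/2) : ℝ)
          ≤ (2:ℝ)^(k+n) * 2^(k-n) := mul_le_mul c1 c2 c0' (by positivity)
        _ = 2^(2*k) := by rw [← pow_add]; congr 1; omega
    rw [div_le_iff₀ hpw]
    nlinarith [hcc, hpw] }

lemma beta_pos (n k : ℕ) (h1 : n ≤ k) (h2 : k % 2 = n % 2) : 0 < betaCoef n k := by
  rw [betaCoef, if_pos ⟨h1, h2⟩]
  have c1 : 0 < Nat.choose (k+n) ((k+n)/2) := Nat.choose_pos (by omega)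
  have c2 : 0 < Nat.choose (k-n) ((k-n)/2) := Nat.choose_pos (by omega)
  have c1' : (0:ℝ) < Nat.choose (k+n) ((k+n)/2) := by exact_mod_cast c1
  have c2' : (0:ℝ) < Nat.choose (k-n) ((k-n)/2) := by exact_mod_cast c2
  apply div_pos _ (by positivity)
  split_ifs <;> positivity

theorem fourier_cosine_coeffs_positive (n : ℕ) (t : ℝ) (ht : t ∈ Set.Ioo (0:ℝ) 1) :
    (∀ k : ℕ, n ≤ k → k % 2 = n % 2 → 0 < betaCoef n k) ∧
    ((if n = 0 then (1:ℝ) else 2) / Real.pi) *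
        (∫ θ in (0:ℝ)..Real.pi,
          Real.cos (n * θ) / Real.sqrt (1 - 2 * t * Real.cos θ + t ^ 2))
      = ∑' k : ℕ, betaCoef n k * t ^ k ∧
    0 < ((if n = 0 then (1:ℝ) else 2) / Real.pi) *
        ∫ θ in (0:ℝ)..Real.pi,
          Real.cos (n * θ) / Real.sqrt (1 - 2 * t * Real.cos θ + t ^ 2) := by
  have hsummable : Summable (fun k => betaCoef n k * t ^ k) := by
    apply Summable.of_nonneg_of_le
      (fun k => mul_nonneg (beta_nonneg n k) (pow_nonneg ht.1.le k))
      (fun k => ?_) ((summable_geometric_of_lt_one ht.1.le ht.2).mul_left 2)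
    exact mul_le_mul_of_nonneg_right (beta_le_two n k) (pow_nonneg ht.1.le k)
  have heq : ((if n = 0 then (1:ℝ) else 2) / Real.pi) *
        (∫ θ in (0:ℝ)..Real.pi,
          Real.cos (n * θ) / Real.sqrt (1 - 2 * t * Real.cos θ + t ^ 2))
      = ∑' k : ℕ, betaCoef n k * t ^ k := by
    rw [swap_lemma n ht, ← tsum_mul_left]
    exact tsum_congr (fun k => L3 n k t)
  refine ⟨fun k h1 h2 => beta_pos n k h1 h2, heq, ?_⟩
  rw [heq]
  apply Summable.tsum_pos hsummable
    (fun k => mul_nonneg (beta_nonneg n k) (pow_nonneg ht.1.le k)) n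
  exact mul_pos (beta_pos n n le_rfl rfl) (pow_pos ht.1 n)
end

section
/- Let v_n(r, r', Z) = 2∫₀^π V(r,r',Z,θ) cos(nθ) dθ (up to normalization) where V(r,r',Z,θ) = (K + 2a²rr'(1 − cosθ))^{-1/2} with K = K(r,r',Z) > 0 whenever (r,Z) ≠ (r',0) and a > 0, which is the cylindrical-coordinate representation of x ↦ 1/|(1−S)^{-1}x| for S = diag(s₁,s₁,s₃). Then v_n(r, r', Z) > 0 for all n ≥ 0, r, r' > 0 and Z ∈ ℝ. -/
open Polynomial Ring

lemma centralBinom_succ_real (k : ℕ) : (Nat.centralBinom (k+1) : ℝ)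
    = 2*(2*k+1) * Nat.centralBinom k / (k+1) := by
  have hb : ((k+1) : ℝ) * (Nat.centralBinom (k+1) : ℝ) = 2*(2*(k:ℝ)+1) * Nat.centralBinom k := by
    exact_mod_cast Nat.succ_mul_centralBinom_succ k
  field_simp
  linarith [hb]

lemma desc_half (n : ℕ) : (descPochhammer ℤ n).smeval (-(1/2) : ℝ)
    = (-1)^n * (Nat.centralBinom n) / 4^n * n.factorial := by
  induction n with
  | zero => simp
  | succ k ih =>
    rw [descPochhammer_succ_right, smeval_mul, ih, smeval_sub, smeval_X, smeval_natCast,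
      centralBinom_succ_real, Nat.factorial_succ]
    have hk1 : ((k:ℝ)+1) ≠ 0 := by positivity
    push_cast
    field_simp
    ring

noncomputable def cb (k : ℕ) : ℝ := (Nat.centralBinom k : ℝ) / 4^k

lemma cb_pos (k : ℕ) : 0 < cb k := by
  unfold cb
  have : (0:ℝ) < Nat.centralBinom k := by exact_mod_cast Nat.centralBinom_pos k
  positivity

lemma cb_zero : cb 0 = 1 := by simp [cb, Nat.centralBinom]

lemma cb_succ_eq (k : ℕ) : cb (k+1) = cb k * ((2*k+1)/(2*k+2)) := by
  unfold cb
  rw [centralBinom_succ_real, pow_succ]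
  have hk1 : ((k:ℝ)+1) ≠ 0 := by positivity
  field_simp
  ring

lemma cb_succ_le (k : ℕ) : cb (k+1) ≤ cb k := by
  rw [cb_succ_eq]
  have h1 : (2*(k:ℝ)+1)/(2*k+2) ≤ 1 := by
    rw [div_le_one (by positivity)]; linarith
  calc cb k * ((2*(k:ℝ)+1)/(2*k+2)) ≤ cb k * 1 :=
        mul_le_mul_of_nonneg_left h1 (cb_pos k).le
    _ = cb k := mul_one _

lemma cb_le_one (k : ℕ) : cb k ≤ 1 := by
  induction k with
  | zero => simp [cb_zero]
  | succ n ih => exact le_trans (cb_succ_le n) ih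

lemma choose_half (k : ℕ) : Ring.choose (-(1/2) : ℝ) k = (-1)^k * cb k := by
  have h := descPochhammer_eq_factorial_smul_choose (-(1/2) : ℝ) k
  rw [desc_half] at h
  have hf : (0:ℝ) < k.factorial := by exact_mod_cast k.factorial_pos
  rw [nsmul_eq_mul] at h
  have h' : (k.factorial : ℝ) * Ring.choose (-(1/2):ℝ) k
      = (k.factorial:ℝ) * ((-1)^k * cb k) := by
    rw [← h]; unfold cb; field_simp
  exact mul_left_cancel₀ hf.ne' h' 

lemma desc_neg_one (n : ℕ) : (descPochhammer ℤ n).smeval (-1 : ℝ) = (-1)^n * n.factorial := by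
  induction n with
  | zero => simp
  | succ k ih =>
    rw [descPochhammer_succ_right, smeval_mul, ih, smeval_sub, smeval_X, smeval_natCast,
      Nat.factorial_succ]
    push_cast
    ring

lemma choose_neg_one (k : ℕ) : Ring.choose (-1 : ℝ) k = (-1)^k := by
  have h := descPochhammer_eq_factorial_smul_choose (-1 : ℝ) k
  rw [desc_neg_one, nsmul_eq_mul] at h
  have hf : (0:ℝ) < k.factorial := by exact_mod_cast k.factorial_pos
  have h' : (k.factorial : ℝ) * Ring.choose (-1:ℝ) k = (k.factorial:ℝ) * (-1)^k := by
    rw [← h]; ring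
  exact mul_left_cancel₀ hf.ne' h' 

lemma cb_conv (k : ℕ) : ∑ ij ∈ Finset.HasAntidiagonal.antidiagonal k, cb ij.1 * cb ij.2 = 1 := by
  have h := Ring.add_choose_eq (r := (-(1/2):ℝ)) (s := (-(1/2):ℝ)) k (Commute.all _ _)
  have hsum : (-(1/2) : ℝ) + (-(1/2)) = -1 := by norm_num
  rw [hsum, choose_neg_one] at h
  have h2 : ∀ ij ∈ Finset.HasAntidiagonal.antidiagonal k,
      Ring.choose (-(1/2):ℝ) ij.1 * Ring.choose (-(1/2):ℝ) ij.2
        = (-1)^k * (cb ij.1 * cb ij.2) := by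
    intro ij hij
    have hij' : ij.1 + ij.2 = k := Finset.HasAntidiagonal.mem_antidiagonal.mp hij
    rw [choose_half, choose_half, ← hij', pow_add]
    ring
  rw [Finset.sum_congr rfl h2, ← Finset.mul_sum] at h
  have hne : ((-1:ℝ))^k ≠ 0 := pow_ne_zero _ (by norm_num)
  have h' : ((-1:ℝ))^k * 1 = (-1:ℝ)^k * ∑ ij ∈ Finset.HasAntidiagonal.antidiagonal k, cb ij.1 * cb ij.2 := by
    rw [mul_one, ← h]
  exact (mul_left_cancel₀ hne h').symm

lemma summable_norm_cb {x : ℝ} (hx : |x| < 1) :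
    Summable (fun k => ‖cb k * x^k‖) := by
  apply Summable.of_nonneg_of_le (fun k => norm_nonneg _)
    (fun k => ?_) (summable_geometric_of_lt_one (abs_nonneg x) hx)
  rw [Real.norm_eq_abs, abs_mul, abs_pow, abs_of_pos (cb_pos k)]
  calc cb k * |x|^k ≤ 1 * |x|^k := by
        apply mul_le_mul_of_nonneg_right (cb_le_one k) (by positivity)
    _ = |x|^k := one_mul _

lemma summable_cb {x : ℝ} (hx : |x| < 1) : Summable (fun k => cb k * x^k) :=
  (summable_norm_cb hx).of_norm

lemma cbSum_sq {x : ℝ} (hx : |x| < 1) :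
    (∑' k, cb k * x^k) ^ 2 = (1 - x)⁻¹ := by
  have hc := hasSum_sum_range_mul_of_summable_norm (summable_norm_cb hx) (summable_norm_cb hx)
  have hinner : ∀ n : ℕ, ∑ k ∈ Finset.range (n+1), (cb k * x^k) * (cb (n-k) * x^(n-k))
      = x^n := by
    intro n
    have : ∀ k ∈ Finset.range (n+1), (cb k * x^k) * (cb (n-k) * x^(n-k))
        = (cb k * cb (n-k)) * x^n := by
      intro k hk
      have hkn : k ≤ n := Nat.lt_succ_iff.mp (Finset.mem_range.mp hk)
      rw [show (cb k * x^k) * (cb (n-k) * x^(n-k)) = (cb k * cb (n-k)) * (x^k * x^(n-k)) by ring,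
        ← pow_add, Nat.add_sub_cancel' hkn]
    rw [Finset.sum_congr rfl this, ← Finset.sum_mul]
    rw [← Finset.Nat.sum_antidiagonal_eq_sum_range_succ (fun k l => cb k * cb l), cb_conv, one_mul]
  rw [funext hinner] at hc
  have hg : HasSum (fun n : ℕ => x^n) (1-x)⁻¹ := hasSum_geometric_of_abs_lt_one hx
  have := hc.unique hg
  rw [sq]; exact this

lemma cbSum_pos {x : ℝ} (hx : |x| < 1) : 0 < ∑' k, cb k * x^k := by
  set g := fun k : ℕ => cb k * x^k with hg
  have hsum : Summable g := summable_cb hx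
  have he : Summable (fun j : ℕ => g (2*j)) :=
    (summable_norm_cb hx).of_norm.comp_injective (fun a b h => by omega)
  have ho : Summable (fun j : ℕ => g (2*j+1)) :=
    (summable_norm_cb hx).of_norm.comp_injective (fun a b h => by omega)
  have hsplit : HasSum g (∑' j, g (2*j) + ∑' j, g (2*j+1)) :=
    HasSum.even_add_odd he.hasSum ho.hasSum
  have hpair : HasSum (fun j : ℕ => g (2*j) + g (2*j+1)) (∑' j, g (2*j) + ∑' j, g (2*j+1)) :=
    he.hasSum.add ho.hasSum
  have hterm : ∀ j : ℕ, 0 ≤ g (2*j) + g (2*j+1) := by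
    intro j
    have h1 : g (2*j) = cb (2*j) * x^(2*j) := rfl
    have h2 : g (2*j+1) ≥ -(cb (2*j+1) * x^(2*j)) := by
      have : cb (2*j+1) * x^(2*j+1) ≥ -(cb (2*j+1) * x^(2*j)) := by
        have hxx : x^(2*j+1) ≥ -(x^(2*j)) := by
          have h1 : |x^(2*j+1)| ≤ x^(2*j) := by
            rw [abs_pow]
            calc |x|^(2*j+1) ≤ |x|^(2*j) :=
                  pow_le_pow_of_le_one (abs_nonneg x) hx.le (by omega)
              _ = x^(2*j) := by rw [← abs_pow, abs_of_nonneg ((even_two_mul j).pow_nonneg x)]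
          linarith [neg_abs_le (x^(2*j+1))]
        nlinarith [cb_pos (2*j+1)]
      exact this
    have h3 : cb (2*j+1) ≤ cb (2*j) := cb_succ_le (2*j)
    have h4 : (0:ℝ) ≤ x^(2*j) := (even_two_mul j).pow_nonneg x
    nlinarith
  have hge : g 0 + g 1 ≤ ∑' j, g (2*j) + ∑' j, g (2*j+1) := by
    have := le_hasSum hpair 0 (fun j _ => hterm j)
    simpa using this
  have h01 : 0 < g 0 + g 1 := by
    have : g 0 = 1 := by simp [hg, cb_zero]
    have h1 : g 1 = cb 1 * x := by simp [hg]
    have hcb1 : cb 1 = 1/2 := by norm_num [cb, Nat.centralBinom]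
    have hx' : -1 < x := neg_lt_of_abs_lt hx
    rw [this, h1, hcb1]
    nlinarith
  have := hsplit.tsum_eq
  linarith [this ▸ hge]

lemma hasSum_cb_sqrt {x : ℝ} (hx : |x| < 1) :
    HasSum (fun k => cb k * x^k) (1 / Real.sqrt (1 - x)) := by
  have hsum := (summable_cb hx).hasSum
  have hx1 : 0 < 1 - x := by have := lt_of_abs_lt hx; linarith
  have hF : (∑' k, cb k * x^k) = 1 / Real.sqrt (1 - x) := by
    have hpos := cbSum_pos hx
    have hsq := cbSum_sq hx
    have : ∑' k, cb k * x^k = Real.sqrt ((1-x)⁻¹) := by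
      rw [← hsq, Real.sqrt_sq hpos.le]
    rw [this, Real.sqrt_inv, one_div]
  rwa [hF] at hsum

open Real intervalIntegral in
noncomputable def Jint (k n : ℕ) : ℝ := ∫ θ in (0:ℝ)..Real.pi, (Real.cos θ)^k * Real.cos (n*θ)

lemma Jint_cont (k n : ℕ) : Continuous (fun θ : ℝ => (Real.cos θ)^k * Real.cos (n*θ)) := by
  continuity

lemma Jint_zero_zero : Jint 0 0 = Real.pi := by
  simp [Jint]

lemma Jint_zero_succ (n : ℕ) : Jint 0 (n+1) = 0 := by
  unfold Jint
  have hc : ((n:ℝ)+1) ≠ 0 := by positivity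
  simp only [pow_zero, one_mul]
  have : ∀ θ : ℝ, Real.cos (((n+1 : ℕ):ℝ) * θ) = Real.cos (((n:ℝ)+1) * θ) := by
    intro θ; norm_num
  rw [funext this, intervalIntegral.integral_comp_mul_left (fun x => Real.cos x) hc]
  rw [integral_cos]
  have : ((n:ℝ)+1) * Real.pi = ((n+1 : ℕ):ℝ) * Real.pi := by push_cast; ring
  rw [mul_zero, this, Real.sin_nat_mul_pi]
  simp

lemma Jint_succ_succ (k n : ℕ) :
    Jint (k+1) (n+1) = (Jint k (n+2) + Jint k n) / 2 := by
  unfold Jint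
  push_cast
  have hpt : ∀ θ : ℝ, Real.cos θ^(k+1) * Real.cos (((n:ℝ)+1)*θ)
      = (Real.cos θ^k * Real.cos (((n:ℝ)+2)*θ) + Real.cos θ^k * Real.cos ((n:ℝ)*θ)) / 2 := by
    intro θ
    have hc := Real.cos_add (((n:ℝ)+1) * θ) θ
    have hs := Real.cos_sub (((n:ℝ)+1) * θ) θ
    have e1 : ((n:ℝ)+1) * θ + θ = ((n:ℝ)+2) * θ := by ring
    have e2 : ((n:ℝ)+1) * θ - θ = (n:ℝ) * θ := by ring
    rw [e1] at hc
    rw [e2] at hs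
    have h1 : Real.cos (((n:ℝ)+2)*θ) + Real.cos ((n:ℝ)*θ)
        = 2 * Real.cos (((n:ℝ)+1)*θ) * Real.cos θ := by linarith
    linear_combination (-(Real.cos θ^k) / 2) * h1
  have c1 : Continuous fun θ:ℝ => Real.cos θ^k * Real.cos (((n:ℝ)+2)*θ) := by continuity
  have c2 : Continuous fun θ:ℝ => Real.cos θ^k * Real.cos ((n:ℝ)*θ) := by continuity
  rw [funext hpt, intervalIntegral.integral_div,
    intervalIntegral.integral_add (c1.intervalIntegrable _ _) (c2.intervalIntegrable _ _)]

lemma Jint_succ_zero (k : ℕ) : Jint (k+1) 0 = Jint k 1 := by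
  unfold Jint
  push_cast
  congr 1
  funext θ
  simp [zero_mul, one_mul, pow_succ]

lemma Jint_nonneg (k : ℕ) : ∀ n, 0 ≤ Jint k n := by
  induction k with
  | zero =>
    intro n
    cases n with
    | zero => rw [Jint_zero_zero]; exact Real.pi_pos.le
    | succ m => rw [Jint_zero_succ]
  | succ k ih =>
    intro n
    cases n with
    | zero => rw [Jint_succ_zero]; exact ih 1
    | succ m =>
      rw [Jint_succ_succ]
      have := ih (m+2)
      have := ih m
      linarith

lemma Jint_diag_pos (n : ℕ) : 0 < Jint n n := by
  induction n with
  | zero => rw [Jint_zero_zero]; exact Real.pi_pos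
  | succ k ih =>
    rw [Jint_succ_succ]
    have := Jint_nonneg k (k+2)
    linarith

set_option maxHeartbeats 1000000 in
theorem cylindrical_fourier_coeff_positive (a : ℝ) (ha : 0 < a)
    (K : ℝ) (hK : 0 < K) (n : ℕ) (r r' : ℝ) (hr : 0 < r) (hr' : 0 < r') :
    0 < 2 * ∫ θ in (0:ℝ)..Real.pi,
        Real.cos (n * θ) / Real.sqrt (K + 2 * a ^ 2 * r * r' * (1 - Real.cos θ)) := by
  set B := 2 * a ^ 2 * r * r' with hBdef
  have hB : 0 < B := by positivity
  set A := K + B with hAdef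
  have hA : 0 < A := by positivity
  set t := B / A with htdef
  have ht0 : 0 < t := by positivity
  have ht1 : t < 1 := by
    rw [htdef, div_lt_one hA]; linarith
  have hsA : 0 < Real.sqrt A := Real.sqrt_pos.mpr hA
  -- pointwise rewrite of the integrand
  have hfact : ∀ θ : ℝ, K + B * (1 - Real.cos θ) = A * (1 - t * Real.cos θ) := by
    intro θ
    rw [htdef]
    field_simp
    ring
  have habs : ∀ θ : ℝ, |t * Real.cos θ| < 1 := by
    intro θ
    rw [abs_mul, abs_of_pos ht0]
    calc t * |Real.cos θ| ≤ t * 1 :=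
          mul_le_mul_of_nonneg_left (Real.abs_cos_le_one θ) ht0.le
      _ < 1 := by linarith
  have hpos1 : ∀ θ : ℝ, 0 < 1 - t * Real.cos θ := by
    intro θ
    have := (abs_lt.mp (habs θ)).2
    linarith
  -- per-θ HasSum
  set F : ℕ → ℝ → ℝ := fun k θ =>
    (Real.sqrt A)⁻¹ * Real.cos (n * θ) * (cb k * t^k * Real.cos θ ^ k) with hFdef
  set g : ℝ → ℝ := fun θ =>
    Real.cos (n * θ) / Real.sqrt (K + B * (1 - Real.cos θ)) with hgdef
  have hgsum : ∀ θ : ℝ, HasSum (fun k => F k θ) (g θ) := by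
    intro θ
    have h1 := (hasSum_cb_sqrt (habs θ)).mul_left ((Real.sqrt A)⁻¹ * Real.cos (n * θ))
    have heq : ∀ k : ℕ, (Real.sqrt A)⁻¹ * Real.cos (n * θ) * (cb k * (t * Real.cos θ)^k)
        = F k θ := by
      intro k; rw [hFdef]; simp only [mul_pow]; ring
    rw [funext heq] at h1
    have hval : (Real.sqrt A)⁻¹ * Real.cos (n * θ) * (1 / Real.sqrt (1 - t * Real.cos θ))
        = g θ := by
      rw [hgdef]
      simp only
      rw [hfact θ, Real.sqrt_mul hA.le]
      have h2 : 0 < Real.sqrt (1 - t * Real.cos θ) := Real.sqrt_pos.mpr (hpos1 θ)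
      field_simp
    rwa [hval] at h1
  -- swap sum and integral
  have hle : (0:ℝ) ≤ Real.pi := Real.pi_pos.le
  set μ := MeasureTheory.volume.restrict (Set.Ioc (0:ℝ) Real.pi) with hμ
  set bound : ℕ → ℝ → ℝ := fun k _ => (Real.sqrt A)⁻¹ * (cb k * t^k) with hbd
  have hFcont : ∀ k, Continuous (F k) := by
    intro k; rw [hFdef]; continuity
  have hswap : HasSum (fun k => ∫ θ, F k θ ∂μ) (∫ θ, g θ ∂μ) := by
    apply MeasureTheory.hasSum_integral_of_dominated_convergence bound
    · exact fun k => (hFcont k).aestronglyMeasurable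
    · intro k
      filter_upwards with θ
      have hcb := cb_pos k
      have hnorm : ‖F k θ‖
          = ((Real.sqrt A)⁻¹ * (cb k * t^k)) * (|Real.cos (n*θ)| * |Real.cos θ|^k) := by
        rw [hFdef]
        simp only [Real.norm_eq_abs, abs_mul, abs_pow]
        rw [abs_of_pos (inv_pos.mpr hsA), abs_of_pos hcb, abs_of_pos ht0]
        ring
      rw [hnorm, hbd]
      have h1 : |Real.cos (n*θ)| * |Real.cos θ|^k ≤ 1 := by
        have := Real.abs_cos_le_one (n*θ)
        have h2 : |Real.cos θ|^k ≤ 1 := pow_le_one₀ (abs_nonneg _) (Real.abs_cos_le_one θ)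
        nlinarith [abs_nonneg (Real.cos (n*θ)), pow_nonneg (abs_nonneg (Real.cos θ)) k]
      have hcc : 0 ≤ (Real.sqrt A)⁻¹ * (cb k * t^k) := by
        have := pow_pos ht0 k; positivity
      calc ((Real.sqrt A)⁻¹ * (cb k * t^k)) * (|Real.cos (n*θ)| * |Real.cos θ|^k)
          ≤ ((Real.sqrt A)⁻¹ * (cb k * t^k)) * 1 := mul_le_mul_of_nonneg_left h1 hcc
        _ = (Real.sqrt A)⁻¹ * (cb k * t^k) := mul_one _
    · filter_upwards with θ
      apply Summable.mul_left
      apply Summable.of_nonneg_of_le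
        (fun k => mul_nonneg (cb_pos k).le (pow_pos ht0 k).le) (fun k => ?_)
        (summable_geometric_of_lt_one ht0.le ht1)
      calc cb k * t^k ≤ 1 * t^k :=
            mul_le_mul_of_nonneg_right (cb_le_one k) (by positivity)
        _ = t^k := one_mul _
    · haveI : MeasureTheory.IsFiniteMeasure μ := by
        constructor
        rw [hμ, MeasureTheory.Measure.restrict_apply_univ]
        exact measure_Ioc_lt_top
      simp only [hbd]
      exact MeasureTheory.integrable_const _
    · filter_upwards with θ
      exact hgsum θ
  -- identify the integrals
  have hμint : ∀ f : ℝ → ℝ, (∫ θ, f θ ∂μ) = ∫ θ in (0:ℝ)..Real.pi, f θ := by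
    intro f
    rw [intervalIntegral.integral_of_le hle, hμ]
  have hterm : ∀ k, (∫ θ, F k θ ∂μ) = (Real.sqrt A)⁻¹ * (cb k * t^k) * Jint k n := by
    intro k
    rw [hμint, hFdef, Jint]
    rw [show (fun θ => (Real.sqrt A)⁻¹ * Real.cos (n * θ) * (cb k * t^k * Real.cos θ ^ k))
        = (fun θ => ((Real.sqrt A)⁻¹ * (cb k * t^k)) * (Real.cos θ ^ k * Real.cos (n * θ)))
      from funext fun θ => by ring]
    rw [intervalIntegral.integral_const_mul]
  rw [funext hterm] at hswap
  have hnonneg : ∀ k, 0 ≤ (Real.sqrt A)⁻¹ * (cb k * t^k) * Jint k n := by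
    intro k
    have h0 := Jint_nonneg k n
    have h1 : 0 ≤ (Real.sqrt A)⁻¹ * (cb k * t^k) :=
      mul_nonneg (inv_pos.mpr hsA).le (mul_nonneg (cb_pos k).le (pow_pos ht0 k).le)
    exact mul_nonneg h1 h0
  have hposn : 0 < (Real.sqrt A)⁻¹ * (cb n * t^n) * Jint n n := by
    have h1 : 0 < (Real.sqrt A)⁻¹ * (cb n * t^n) :=
      mul_pos (inv_pos.mpr hsA) (mul_pos (cb_pos n) (pow_pos ht0 n))
    exact mul_pos h1 (Jint_diag_pos n)
  have hfin : 0 < ∫ θ, g θ ∂μ := by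
    have hge := le_hasSum hswap n (fun k _ => hnonneg k)
    linarith
  rw [hμint] at hfin
  have : (∫ θ in (0:ℝ)..Real.pi,
      Real.cos (n * θ) / Real.sqrt (K + 2 * a ^ 2 * r * r' * (1 - Real.cos θ)))
      = ∫ θ in (0:ℝ)..Real.pi, g θ := by
    rw [hgdef]
  rw [this]
  linarith
end

section
/- Let n ≥ 2 and let g : [0,π] → ℝ be positive and strictly decreasing. Then T_n := ∫₀^π g(θ)(cos(nθ) − cosθ) dθ < 0. -/
open Real MeasureTheory Set


/-- |sin(n t)| < n sin t for t ∈ (0,π), n ≥ 2. -/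
lemma aux_abs_sin_lt (n : ℕ) (hn : 2 ≤ n) {t : ℝ} (h0 : 0 < t) (hπ : t < Real.pi) :
    |Real.sin (n * t)| < n * Real.sin t := by
  have hst : 0 < Real.sin t := Real.sin_pos_of_pos_of_lt_pi h0 hπ
  have hct : |Real.cos t| < 1 := by
    rw [← sq_lt_one_iff_abs_lt_one]
    nlinarith [Real.sin_sq_add_cos_sq t]
  induction n, hn using Nat.le_induction with
  | base =>
      push_cast
      rw [Real.sin_two_mul, abs_mul, abs_mul]
      rw [abs_of_pos hst, abs_of_pos (by norm_num : (0:ℝ) < 2)]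
      nlinarith
  | succ m hm ih =>
      have h1 : ((m:ℝ) + 1) * t = m * t + t := by ring
      push_cast
      rw [h1, Real.sin_add]
      calc |Real.sin (m*t) * Real.cos t + Real.cos (m*t) * Real.sin t|
          ≤ |Real.sin (m*t)| * |Real.cos t| + |Real.cos (m*t)| * Real.sin t := by
            refine (abs_add_le _ _).trans ?_
            rw [abs_mul, abs_mul, abs_of_pos hst]
        _ < (m:ℝ) * Real.sin t + Real.sin t := by
            nlinarith [abs_nonneg (Real.sin (m*t)), Real.abs_cos_le_one (m*t),
              abs_nonneg (Real.cos t)]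
        _ = ((m:ℝ) + 1) * Real.sin t := by ring

/-- the antiderivative F(t) = sin(nt)/n - sin t satisfies our bounds -/
lemma aux_F_nonpos (n : ℕ) (hn : 2 ≤ n) {t : ℝ} (h0 : 0 ≤ t) (hπ : t ≤ Real.pi) :
    Real.sin (n * t) / n - Real.sin t ≤ 0 := by
  rcases eq_or_lt_of_le h0 with h|h
  · simp [← h]
  rcases eq_or_lt_of_le hπ with h'|h'
  · rw [h', Real.sin_nat_mul_pi, Real.sin_pi]; norm_num
  have := aux_abs_sin_lt n hn h h'
  have hn0 : (0:ℝ) < n := by positivity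
  have h2 : Real.sin (n*t) < n * Real.sin t := (le_abs_self _).trans_lt this
  rw [sub_nonpos, div_le_iff₀ hn0]
  nlinarith

lemma aux_F_neg (n : ℕ) (hn : 2 ≤ n) {t : ℝ} (h0 : 0 < t) (hπ : t < Real.pi) :
    Real.sin (n * t) / n - Real.sin t < 0 := by
  have := aux_abs_sin_lt n hn h0 hπ
  have hn0 : (0:ℝ) < n := by positivity
  have h2 : Real.sin (n*t) < n * Real.sin t := (le_abs_self _).trans_lt this
  rw [sub_neg, div_lt_iff₀ hn0]
  nlinarith

/-- Fundamental theorem computation. -/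
lemma aux_integral_F (n : ℕ) (hn : 2 ≤ n) (t : ℝ) :
    ∫ θ in (0:ℝ)..t, (Real.cos (n * θ) - Real.cos θ)
      = Real.sin (n * t) / n - Real.sin t := by
  have hn0 : (n:ℝ) ≠ 0 := by positivity
  have hder : ∀ x ∈ Set.uIcc (0:ℝ) t,
      HasDerivAt (fun y => Real.sin (n * y) / n - Real.sin y)
        (Real.cos (n * x) - Real.cos x) x := by
    intro x _
    have h1 : HasDerivAt (fun y : ℝ => (n:ℝ) * y) n x := by
      simpa using (hasDerivAt_id x).const_mul (n:ℝ)
    have h2 : HasDerivAt (fun y => Real.sin ((n:ℝ) * y)) (Real.cos (n*x) * n) x :=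
      (Real.hasDerivAt_sin ((n:ℝ)*x)).comp x h1
    have h3 := (h2.div_const (n:ℝ)).sub (Real.hasDerivAt_sin x)
    have : Real.cos (n*x) * n / n = Real.cos (n*x) := by field_simp
    rwa [this] at h3
  rw [intervalIntegral.integral_eq_sub_of_hasDerivAt hder]
  · simp
  · exact (Continuous.sub (Real.continuous_cos.comp (continuous_const.mul continuous_id))
      Real.continuous_cos).intervalIntegrable _ _

/-- Strict negativity of integral from nonpositivity plus a positive-measure negativity set. -/
lemma aux_neg_integral {φ : ℝ → ℝ} {S J : Set ℝ} (hS : MeasurableSet S) (hJS : J ⊆ S)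
    (hJ : 0 < volume J) (hint : IntegrableOn φ S volume)
    (h0 : ∀ x ∈ S, φ x ≤ 0) (hneg : ∀ x ∈ J, φ x < 0) :
    (∫ x in S, φ x) < 0 := by
  have hae : 0 ≤ᵐ[volume.restrict S] (fun x => -φ x) := by
    filter_upwards [ae_restrict_mem hS] with x hx
    simpa using h0 x hx
  have h1 : (∫ x in S, -φ x) ≥ 0 := integral_nonneg_of_ae hae
  rcases lt_or_eq_of_le h1 with h|h
  · have : (∫ x in S, -φ x) = -(∫ x in S, φ x) := by rw [integral_neg]
    linarith [this ▸ h]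
  · exfalso
    have hz : (fun x => -φ x) =ᵐ[volume.restrict S] 0 :=
      (integral_eq_zero_iff_of_nonneg_ae hae hint.neg).mp h.symm
    have hnull : volume.restrict S {x | -φ x ≠ 0} = 0 := by
      rw [Filter.EventuallyEq, ae_iff] at hz
      simpa using hz
    have hsub : J ⊆ {x | -φ x ≠ 0} := fun x hx => by
      have := hneg x hx; simp; linarith
    have : volume.restrict S J = 0 :=
      le_antisymm (hnull ▸ measure_mono hsub) zero_le
    rw [Measure.restrict_apply' hS, Set.inter_eq_self_of_subset_left hJS] at this
    exact absurd this hJ.ne'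

lemma aux_inner (n : ℕ) (hn : 2 ≤ n) (H : ℝ → ℝ) (hH : Antitone H) (s : ℝ) :
    ∃ t, t ∈ Icc (0:ℝ) Real.pi ∧ (∀ θ ∈ Icc (0:ℝ) Real.pi, θ < t → s < H θ) ∧
      (∀ θ ∈ Icc (0:ℝ) Real.pi, t < θ → H θ ≤ s) ∧
      (∫ θ in Icc (0:ℝ) Real.pi, (if s < H θ then (1:ℝ) else 0)
         * (Real.cos (n * θ) - Real.cos θ)) = Real.sin (n * t) / n - Real.sin t := by
  set A : Set ℝ := {θ | θ ∈ Icc (0:ℝ) Real.pi ∧ s < H θ} with hA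
  set t := sSup ({0} ∪ A) with ht
  have hne : ({0} ∪ A).Nonempty := ⟨0, Or.inl rfl⟩
  have hbdd : BddAbove ({0} ∪ A) := by
    refine ⟨Real.pi, ?_⟩
    rintro x (hx | hx)
    · simp at hx; rw [hx]; exact Real.pi_pos.le
    · exact hx.1.2
  have htmem : t ∈ Icc (0:ℝ) Real.pi := by
    constructor
    · exact le_csSup hbdd (Or.inl rfl)
    · refine csSup_le hne ?_
      rintro x (hx | hx)
      · simp at hx; rw [hx]; exact Real.pi_pos.le
      · exact hx.1.2
  have hchar1 : ∀ θ ∈ Icc (0:ℝ) Real.pi, θ < t → s < H θ := by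
    intro θ hθ hlt
    obtain ⟨x, hx, hθx⟩ := exists_lt_of_lt_csSup hne hlt
    rcases hx with hx | hx
    · simp at hx; rw [hx] at hθx; linarith [hθ.1]
    · exact lt_of_lt_of_le hx.2 (hH hθx.le)
  have hchar2 : ∀ θ ∈ Icc (0:ℝ) Real.pi, t < θ → H θ ≤ s := by
    intro θ hθ hlt
    by_contra hc
    push_neg at hc
    exact absurd (le_csSup hbdd (Or.inr ⟨hθ, hc⟩)) (not_le.mpr hlt)
  refine ⟨t, htmem, hchar1, hchar2, ?_⟩
  set f : ℝ → ℝ := fun θ => Real.cos (n * θ) - Real.cos θ with hf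
  have hne_t : ∀ᵐ (θ : ℝ) ∂(volume : Measure ℝ), θ ≠ t := by
    have h0 : (volume : Measure ℝ) {t} = 0 := measure_singleton t
    rw [ae_iff]
    convert h0 using 2
    ext x; simp
  have hae : (fun θ => (if s < H θ then (1:ℝ) else 0) * f θ)
      =ᵐ[volume.restrict (Icc (0:ℝ) Real.pi)] (Icc (0:ℝ) t).indicator f := by
    filter_upwards [ae_restrict_mem measurableSet_Icc, ae_restrict_of_ae hne_t]
      with θ hθ hθt
    rcases lt_trichotomy θ t with h | h | h
    · rw [if_pos (hchar1 θ hθ h), Set.indicator_of_mem (Set.mem_Icc.mpr ⟨hθ.1, h.le⟩), one_mul]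
    · exact absurd h hθt
    · rw [if_neg (not_lt.mpr (hchar2 θ hθ h)), Set.indicator_of_notMem
        (fun hmem => absurd (Set.mem_Icc.mp hmem).2 (not_le.mpr h)), zero_mul]
  rw [integral_congr_ae hae, setIntegral_indicator measurableSet_Icc,
    Set.inter_eq_self_of_subset_right (Set.Icc_subset_Icc le_rfl htmem.2),
    integral_Icc_eq_integral_Ioc, ← intervalIntegral.integral_of_le htmem.1]
  exact aux_integral_F n hn t

theorem integral_cos_diff_neg (n : ℕ) (hn : 2 ≤ n) (g : ℝ → ℝ)
    (hgpos : ∀ θ ∈ Set.Icc (0:ℝ) Real.pi, 0 < g θ)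
    (hgdec : StrictAntiOn g (Set.Icc (0:ℝ) Real.pi)) :
    (∫ θ in (0:ℝ)..Real.pi, g θ * (Real.cos (n * θ) - Real.cos θ)) < 0 := by
  have hπ := Real.pi_pos
  set f : ℝ → ℝ := fun θ => Real.cos (n * θ) - Real.cos θ with hfdef
  have hfc : Continuous f :=
    (Real.continuous_cos.comp (continuous_const.mul continuous_id)).sub Real.continuous_cos
  have hfb : ∀ θ, |f θ| ≤ 2 := by
    intro θ
    calc |f θ| ≤ |Real.cos (n*θ)| + |Real.cos θ| := abs_sub _ _
      _ ≤ 1 + 1 := add_le_add (Real.abs_cos_le_one _) (Real.abs_cos_le_one _)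
      _ = 2 := by norm_num
  -- clamped version of g minus g π
  set H : ℝ → ℝ := fun θ => g (max 0 (min θ Real.pi)) - g Real.pi with hHdef
  have hclamp : ∀ θ, max 0 (min θ Real.pi) ∈ Icc (0:ℝ) Real.pi := by
    intro θ
    constructor
    · exact le_max_left _ _
    · exact max_le hπ.le (min_le_right _ _)
  have hHeq : ∀ θ ∈ Icc (0:ℝ) Real.pi, H θ = g θ - g Real.pi := by
    intro θ hθ
    simp only [hHdef, min_eq_left hθ.2, max_eq_right hθ.1]
  have hganti : AntitoneOn g (Icc (0:ℝ) Real.pi) := hgdec.antitoneOn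
  have hHanti : Antitone H := by
    intro θ₁ θ₂ h
    have : max 0 (min θ₁ Real.pi) ≤ max 0 (min θ₂ Real.pi) :=
      max_le_max le_rfl (min_le_min h le_rfl)
    exact sub_le_sub_right (hganti (hclamp θ₁) (hclamp θ₂) this) _
  have hHnn : ∀ θ, 0 ≤ H θ := fun θ =>
    sub_nonneg.mpr (hganti (hclamp θ) (right_mem_Icc.mpr hπ.le) (hclamp θ).2)
  set M : ℝ := g 0 - g Real.pi with hMdef
  have hHM : ∀ θ, H θ ≤ M :=
    fun θ => sub_le_sub_right (hganti (left_mem_Icc.mpr hπ.le) (hclamp θ) (hclamp θ).1) _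
  have hM0 : 0 < M :=
    sub_pos.mpr (hgdec (left_mem_Icc.mpr hπ.le) (right_mem_Icc.mpr hπ.le) hπ)
  have hHmeas : Measurable H := hHanti.measurable
  -- measures
  set μ : Measure ℝ := volume.restrict (Icc (0:ℝ) Real.pi) with hμ
  set ν : Measure ℝ := volume.restrict (Icc (0:ℝ) M) with hν
  haveI : IsFiniteMeasure μ := ⟨by
    rw [Measure.restrict_apply_univ]; exact measure_Icc_lt_top⟩
  haveI : IsFiniteMeasure ν := ⟨by
    rw [Measure.restrict_apply_univ]; exact measure_Icc_lt_top⟩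
  -- step 1: reduce to set integral of H * f over Icc
  have hintHf : Integrable (fun θ => H θ * f θ) μ := by
    refine Integrable.mono' (integrable_const (M * 2)) ?_ ?_
    · exact ((hHmeas.mul (hfc.measurable)).aestronglyMeasurable)
    · refine Filter.Eventually.of_forall fun θ => ?_
      rw [Real.norm_eq_abs, abs_mul, abs_of_nonneg (hHnn θ)]
      exact mul_le_mul (hHM θ) (hfb θ) (abs_nonneg _) (le_of_lt hM0)
  have hstep1 : (∫ θ in (0:ℝ)..Real.pi, g θ * f θ) = ∫ θ, H θ * f θ ∂μ := by
    rw [intervalIntegral.integral_of_le hπ.le, ← integral_Icc_eq_integral_Ioc]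
    have hcongr : (∫ θ in Icc (0:ℝ) Real.pi, g θ * f θ)
        = ∫ θ in Icc (0:ℝ) Real.pi, (H θ + g Real.pi) * f θ := by
      refine setIntegral_congr_fun measurableSet_Icc fun θ hθ => ?_
      rw [hHeq θ hθ]; ring
    rw [hcongr]
    have hsplit : ∀ θ, (H θ + g Real.pi) * f θ = H θ * f θ + g Real.pi * f θ := fun θ => by ring
    simp_rw [hsplit]
    rw [integral_add (g := fun θ => g Real.pi * f θ) hintHf ((continuous_const.mul hfc).integrableOn_Icc)]
    have hzero : (∫ θ in Icc (0:ℝ) Real.pi, g Real.pi * f θ) = 0 := by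
      rw [integral_const_mul, integral_Icc_eq_integral_Ioc,
        ← intervalIntegral.integral_of_le hπ.le, aux_integral_F n hn,
        Real.sin_nat_mul_pi, Real.sin_pi]
      simp
    rw [hzero, add_zero]
  -- step 2: layer cake for H
  have hlayer : ∀ θ, H θ = ∫ s, (if s < H θ then (1:ℝ) else 0) ∂ν := by
    intro θ
    have h1 : (fun s => if s < H θ then (1:ℝ) else 0)
        = (Iio (H θ)).indicator (fun _ => (1:ℝ)) := by
      ext s; simp [Set.indicator_apply, Set.mem_Iio]
    rw [hν, h1, setIntegral_indicator measurableSet_Iio]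
    have h2 : Icc (0:ℝ) M ∩ Iio (H θ) = Ico 0 (H θ) := by
      ext s
      simp only [Set.mem_inter_iff, Set.mem_Icc, Set.mem_Iio, Set.mem_Ico]
      constructor
      · rintro ⟨⟨h3, _⟩, h4⟩; exact ⟨h3, h4⟩
      · rintro ⟨h3, h4⟩; exact ⟨⟨h3, le_trans h4.le (hHM θ)⟩, h4⟩
    rw [h2, setIntegral_const, measureReal_def, Real.volume_Ico, smul_eq_mul, mul_one, sub_zero,
      ENNReal.toReal_ofReal (hHnn θ)]
  -- step 3: Fubini
  set G : ℝ → ℝ → ℝ := fun θ s => (if s < H θ then (1:ℝ) else 0) * f θ with hGdef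
  have hGint : Integrable (Function.uncurry G) (μ.prod ν) := by
    refine Integrable.mono' (integrable_const 2) ?_ ?_
    · refine Measurable.aestronglyMeasurable ?_
      refine Measurable.mul ?_ (hfc.measurable.comp measurable_fst)
      exact Measurable.ite (measurableSet_lt measurable_snd (hHmeas.comp measurable_fst))
        measurable_const measurable_const
    · refine Filter.Eventually.of_forall fun p => ?_
      simp only [Function.uncurry, hGdef, Real.norm_eq_abs, abs_mul]
      calc |if p.2 < H p.1 then (1:ℝ) else 0| * |f p.1| ≤ 1 * 2 := by
            refine mul_le_mul ?_ (hfb _) (abs_nonneg _) zero_le_one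
            split <;> simp
        _ = 2 := by norm_num
  have hswap : (∫ θ, H θ * f θ ∂μ) = ∫ s, (∫ θ, G θ s ∂μ) ∂ν := by
    rw [← integral_integral_swap hGint]
    refine integral_congr_ae (Filter.Eventually.of_forall fun θ => ?_)
    show H θ * f θ = ∫ s, G θ s ∂ν
    rw [hlayer θ, ← integral_mul_const]
  -- step 4: conclude
  set φ : ℝ → ℝ := fun s => ∫ θ, G θ s ∂μ with hφdef
  have hφint : Integrable φ ν := hGint.integral_prod_right
  have hφval : ∀ s, ∃ t, t ∈ Icc (0:ℝ) Real.pi ∧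
      (∀ θ ∈ Icc (0:ℝ) Real.pi, θ < t → s < H θ) ∧
      (∀ θ ∈ Icc (0:ℝ) Real.pi, t < θ → H θ ≤ s) ∧
      φ s = Real.sin (n * t) / n - Real.sin t := by
    intro s
    obtain ⟨t, ht, h1, h2, h3⟩ := aux_inner n hn H hHanti s
    exact ⟨t, ht, h1, h2, h3⟩
  have hφnonpos : ∀ s ∈ Icc (0:ℝ) M, φ s ≤ 0 := by
    intro s _
    obtain ⟨t, ht, _, _, h3⟩ := hφval s
    rw [h3]; exact aux_F_nonpos n hn ht.1 ht.2
  -- the strict-negativity window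
  set a : ℝ := Real.pi / 3 with hadef
  set b : ℝ := Real.pi / 2 with hbdef
  have ha : a ∈ Icc (0:ℝ) Real.pi := ⟨by positivity, by linarith⟩
  have hb : b ∈ Icc (0:ℝ) Real.pi := ⟨by positivity, by linarith⟩
  have hab : a < b := by rw [hadef, hbdef]; linarith
  have ha0 : 0 < a := by rw [hadef]; positivity
  have hbπ : b < Real.pi := by rw [hbdef]; linarith
  have hHab : H b < H a := by
    rw [hHeq a ha, hHeq b hb]
    exact sub_lt_sub_right (hgdec ha hb hab) _
  set J : Set ℝ := Ioo (H b) (H a) with hJdef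
  have hJsub : J ⊆ Icc (0:ℝ) M := by
    rintro s ⟨h1, h2⟩
    exact ⟨le_trans (hHnn b) h1.le, le_trans h2.le (hHM a)⟩
  have hJpos : 0 < volume J := by
    rw [hJdef, Real.volume_Ioo]
    exact ENNReal.ofReal_pos.mpr (by linarith)
  have hφneg : ∀ s ∈ J, φ s < 0 := by
    rintro s ⟨hs1, hs2⟩
    obtain ⟨t, ht, h1, h2, h3⟩ := hφval s
    have hta : a ≤ t := by
      by_contra hc
      push_neg at hc
      exact absurd (h2 a ha hc) (not_le.mpr hs2)
    have htb : t ≤ b := by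
      by_contra hc
      push_neg at hc
      exact absurd (h1 b hb hc) (not_lt.mpr hs1.le)
    rw [h3]
    exact aux_F_neg n hn (lt_of_lt_of_le ha0 hta) (lt_of_le_of_lt htb hbπ)
  rw [hstep1, hswap]
  exact aux_neg_integral measurableSet_Icc hJsub hJpos hφint hφnonpos hφneg
end
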